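/- arXiv:2104.11971 — 12 statements merged into one kernel-verified Lean document; each statement's English description precedes it below -/
import Mathlib

section
/- For every integer n ≥ 2 and every integer m with 0 ≤ m ≤ n−1, one has q_m ≥ q_{m+1} if and only if m + 1/2 < 2n/3. -/
open Finset intervalIntegral MeasureTheory

lemma bstep (u : ℝ) (h0 : 0 ≤ u) (h1 : u ≤ 1) (k : ℕ) :
    (1 - u/(k+2))^(k+1) ≤ (1 - u/(k+1))^k := by
  rcases Nat.eq_zero_or_pos k with hk | hk
  · subst hk
    push_cast
    norm_num
    nlinarith
  · have hk1 : (1:ℝ) ≤ (k:ℝ) := by exact_mod_cast hk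
    have hA : (0:ℝ) < (k:ℝ) + 1 := by linarith
    have hA2 : (0:ℝ) < (k:ℝ) + 2 := by linarith
    have hku : (0:ℝ) < (k:ℝ) + 1 - u := by linarith
    have hk2u : (0:ℝ) < (k:ℝ) + 2 - u := by linarith
    have hB : (0:ℝ) < ((k:ℝ)+2-u)*((k:ℝ)+1) := by positivity
    have hbern := one_add_mul_le_pow (a := -u/(((k:ℝ)+2-u)*((k:ℝ)+1)))
      (by rw [neg_div, neg_le, neg_neg]; rw [div_le_iff₀ hB]; nlinarith) (k+1)
    have e1 : (1 : ℝ) + (-u/(((k:ℝ)+2-u)*((k:ℝ)+1))) =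
        (((k:ℝ)+1-u)*((k:ℝ)+2))/(((k:ℝ)+2-u)*((k:ℝ)+1)) := by
      field_simp; ring
    have e2 : (1 : ℝ) + ((k+1 : ℕ) : ℝ) * (-u/(((k:ℝ)+2-u)*((k:ℝ)+1))) =
        (((k:ℝ)+2-2*u)*((k:ℝ)+1))/(((k:ℝ)+2-u)*((k:ℝ)+1)) := by
      push_cast
      field_simp; ring
    rw [e1, e2, div_pow, div_le_div_iff₀ hB (pow_pos hB _)] at hbern
    have hmul : (((k:ℝ)+2-2*u)*((k:ℝ)+1)) * (((k:ℝ)+2-u)*((k:ℝ)+1))^k ≤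
        (((k:ℝ)+1-u)*((k:ℝ)+2))^(k+1) := by
      have := hbern
      rw [pow_succ (((k:ℝ)+2-u)*((k:ℝ)+1)) k] at this
      have h' : ((((k:ℝ)+2-2*u)*((k:ℝ)+1)) * (((k:ℝ)+2-u)*((k:ℝ)+1))^k) * ((((k:ℝ)+2-u)*((k:ℝ)+1))) ≤
          ((((k:ℝ)+1-u)*((k:ℝ)+2))^(k+1)) * ((((k:ℝ)+2-u)*((k:ℝ)+1))) := by
        calc ((((k:ℝ)+2-2*u)*((k:ℝ)+1)) * (((k:ℝ)+2-u)*((k:ℝ)+1))^k) * ((((k:ℝ)+2-u)*((k:ℝ)+1)))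
            = ((k:ℝ)+2-2*u)*((k:ℝ)+1) * ((((k:ℝ)+2-u)*((k:ℝ)+1))^k * (((k:ℝ)+2-u)*((k:ℝ)+1))) := by
              ring
          _ ≤ _ := this
      exact le_of_mul_le_mul_right h' hB
    rw [show (1:ℝ) - u/(k+2) = ((k:ℝ)+2-u)/((k:ℝ)+2) by field_simp,
        show (1:ℝ) - u/(k+1) = ((k:ℝ)+1-u)/((k:ℝ)+1) by field_simp,
        div_pow, div_pow, div_le_div_iff₀ (by positivity) (by positivity)]
    -- goal : (k+2-u)^(k+1) * (k+1)^k ≤ (k+1-u)^k * (k+2)^(k+1)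
    have h2 : (0:ℝ) < ((k:ℝ)+1-u)*((k:ℝ)+1) := by positivity
    have step1 : (((k:ℝ)+2-u)*((k:ℝ)+1))^k * (((k:ℝ)+2-u)*((k:ℝ)+1)*(((k:ℝ)+1-u))) ≤
        (((k:ℝ)+2-u)*((k:ℝ)+1))^k * (((k:ℝ)+2-2*u)*((k:ℝ)+1)*((k:ℝ)+1)) := by
      apply mul_le_mul_of_nonneg_left ?_ (by positivity)
      nlinarith [mul_nonneg h0 (sub_nonneg.2 h1)]
    have key' : (((k:ℝ)+2-u)^(k+1) * ((k:ℝ)+1)^k) * (((k:ℝ)+1-u)*((k:ℝ)+1)) ≤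
        ((((k:ℝ)+1-u))^k * ((k:ℝ)+2)^(k+1)) * (((k:ℝ)+1-u)*((k:ℝ)+1)) := by
      calc (((k:ℝ)+2-u)^(k+1) * ((k:ℝ)+1)^k) * (((k:ℝ)+1-u)*((k:ℝ)+1))
          = ((((k:ℝ)+2-u)*((k:ℝ)+1))^k * (((k:ℝ)+2-u)*((k:ℝ)+1)*(((k:ℝ)+1-u)))) := by
            rw [mul_pow]; ring
        _ ≤ (((k:ℝ)+2-u)*((k:ℝ)+1))^k * (((k:ℝ)+2-2*u)*((k:ℝ)+1)*((k:ℝ)+1)) := step1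
        _ = ((((k:ℝ)+2-2*u)*((k:ℝ)+1)) * (((k:ℝ)+2-u)*((k:ℝ)+1))^k) * ((k:ℝ)+1) := by ring
        _ ≤ (((k:ℝ)+1-u)*((k:ℝ)+2))^(k+1) * ((k:ℝ)+1) := by
            exact mul_le_mul_of_nonneg_right hmul (by positivity)
        _ = ((((k:ℝ)+1-u))^k * ((k:ℝ)+2)^(k+1)) * (((k:ℝ)+1-u)*((k:ℝ)+1)) := by
            rw [mul_pow, pow_succ]; ring
    exact le_of_mul_le_mul_right key' h2

lemma bmono (u : ℝ) (h0 : 0 ≤ u) (h1 : u ≤ 1) {a b : ℕ} (hab : a ≤ b) :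
    (1 - u/(b+1))^b ≤ (1 - u/(a+1))^a := by
  induction b, hab using Nat.le_induction with
  | base => exact le_refl _
  | succ b hb ih =>
      refine le_trans ?_ ih
      have := bstep u h0 h1 b
      push_cast at this ⊢
      convert this using 3
      · rfl
      · ring


lemma famA (c : ℕ) (hc : 1 ≤ c) :
    1 ≤ ∫ u in (0:ℝ)..1, (1 - u/(2*(c:ℝ)+1))^(2*c) * (1 + u/(c:ℝ))^c := by
  have hC : (1:ℝ) ≤ (c:ℝ) := by exact_mod_cast hc
  set A : ℝ := 2*(c:ℝ)+1 with hA
  set B : ℝ := (c:ℝ) with hB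
  have hA0 : (0:ℝ) < A := by simp only [hA]; linarith
  have hB0 : (0:ℝ) < B := by simp only [hB]; linarith
  -- lower bound function (Bernoulli)
  set g : ℝ → ℝ := fun u => 1 + (c:ℝ) * ((1 - u/A)^2 * (1 + u/B) - 1) with hg
  have hpt : ∀ u ∈ Set.Icc (0:ℝ) 1, g u ≤ (1 - u/A)^(2*c) * (1 + u/B)^c := by
    intro u hu
    obtain ⟨hu0, hu1⟩ := hu
    have h1 : (1 - u/A)^(2*c) * (1 + u/B)^c = ((1 - u/A)^2 * (1 + u/B))^c := by
      rw [mul_pow, ← pow_mul]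
    rw [h1, hg]
    have hnn : (0:ℝ) ≤ (1 - u/A)^2 * (1 + u/B) := by positivity
    have := one_add_mul_le_pow (a := (1 - u/A)^2 * (1 + u/B) - 1) (by linarith) c
    simpa using this
  -- integrability
  have hig : IntervalIntegrable g volume 0 1 := by
    apply Continuous.intervalIntegrable; fun_prop
  have hif : IntervalIntegrable (fun u => (1 - u/A)^(2*c) * (1 + u/B)^c) volume 0 1 := by
    apply Continuous.intervalIntegrable; fun_prop
  have hmono := intervalIntegral.integral_mono_on (by norm_num : (0:ℝ) ≤ 1) hig hif hpt
  -- compute ∫ g via antiderivative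
  set F : ℝ → ℝ := fun u => u + (c:ℝ) * ((1/B - 2/A) * u^2/2 + (1/A^2 - 2/(A*B)) * u^3/3
      + (1/(A^2*B)) * u^4/4) with hF
  have hderiv : ∀ u ∈ Set.uIcc (0:ℝ) 1, HasDerivAt F (g u) u := by
    intro u _
    have h1 : HasDerivAt (fun u : ℝ => u) 1 u := hasDerivAt_id u
    have h2 : HasDerivAt (fun u : ℝ => u^2) (2*u) u := by
      simpa using hasDerivAt_pow 2 u
    have h3 : HasDerivAt (fun u : ℝ => u^3) (3*u^2) u := by
      simpa using hasDerivAt_pow 3 u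
    have h4 : HasDerivAt (fun u : ℝ => u^4) (4*u^3) u := by
      simpa using hasDerivAt_pow 4 u
    have : HasDerivAt F (1 + (c:ℝ) * ((1/B - 2/A) * (2*u)/2 + (1/A^2 - 2/(A*B)) * (3*u^2)/3
        + (1/(A^2*B)) * (4*u^3)/4)) u := by
      apply HasDerivAt.add h1
      apply HasDerivAt.const_mul
      exact (((h2.const_mul _).div_const _).add ((h3.const_mul _).div_const _)).add
        ((h4.const_mul _).div_const _)
    convert this using 1
    rw [hg]
    have hA0' : A ≠ 0 := ne_of_gt hA0
    have hB0' : B ≠ 0 := ne_of_gt hB0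
    field_simp
    ring
  have hint : ∫ u in (0:ℝ)..1, g u = F 1 - F 0 := by
    apply intervalIntegral.integral_eq_sub_of_hasDerivAt hderiv hig
  have hval : F 1 - F 0 = 1 + 1/(12*A^2) := by
    rw [hF]
    have hA0' : A ≠ 0 := ne_of_gt hA0
    have hB0' : B ≠ 0 := ne_of_gt hB0
    simp only [hB]
    rw [hA]
    field_simp
    ring
  have : (1:ℝ) ≤ ∫ u in (0:ℝ)..1, g u := by
    rw [hint, hval]
    have : (0:ℝ) < 1/(12*A^2) := by positivity
    linarith
  linarith


lemma exp_quad {x : ℝ} (h0 : 0 ≤ x) (h1 : x ≤ 1) : Real.exp x ≤ 1 + x + (3/4)*x^2 := by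
  have := Real.exp_bound' h0 h1 (n := 2) (by norm_num)
  simp [Finset.sum_range_succ, Nat.factorial] at this
  convert this using 1
  ring

set_option maxHeartbeats 3200000 in
lemma famB (c : ℕ) (hc : 1 ≤ c) :
    (∫ u in (0:ℝ)..1, (1 - u/(2*(c:ℝ)+2))^(2*c+1) * (1 + u/(c:ℝ))^c) < 1 := by
  have hC : (1:ℝ) ≤ (c:ℝ) := by exact_mod_cast hc
  set B : ℝ := (c:ℝ) with hB
  set A : ℝ := 2*B+2 with hAB
  set α : ℝ := A⁻¹ with hα
  have hcB : (c:ℝ) = B := rfl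
  clear_value B
  have hA0 : (0:ℝ) < A := by rw [hAB]; linarith
  have hA4 : (4:ℝ) ≤ A := by rw [hAB]; linarith
  have hB0 : (0:ℝ) < B := by linarith
  have hA0' : A ≠ 0 := ne_of_gt hA0
  have hB0' : B ≠ 0 := ne_of_gt hB0
  have hα1 : α = 1/A := by rw [hα, one_div]
  clear_value α
  set β1 : ℝ := 2*α with hβ1
  set β2 : ℝ := -(3*B+4)*α^2 with hβ2
  set β3 : ℝ := α^2 with hβ3
  clear_value β1 β2 β3
  have hdivα : ∀ u : ℝ, u/A = u*α := by
    intro u; rw [hα1]; field_simp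
  set g : ℝ → ℝ := fun u =>
    (1 + (β1*u + β2*u^2 + β3*u^3) + (3/4)*(β1*u + β2*u^2 + β3*u^3)^2) * (1 - u*α) with hg
  have hpt : ∀ u ∈ Set.Icc (0:ℝ) 1, (1 - u/A)^(2*c+1) * (1 + u/B)^c ≤ g u := by
    intro u hu
    obtain ⟨hu0, hu1⟩ := hu
    have huA : 0 ≤ 1 - u/A := by
      rw [sub_nonneg, div_le_one hA0]; linarith
    set ψ : ℝ := (1 - u/A)^2 * (1 + u/B) with hψ
    have hψ0 : 0 ≤ ψ := by
      rw [hψ]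
      have : 0 ≤ 1 + u/B := by positivity
      positivity
    have hsplit : (1 - u/A)^(2*c+1) * (1 + u/B)^c = ψ^c * (1 - u/A) := by
      rw [hψ, mul_pow, ← pow_mul, pow_succ]
      ring
    rw [hsplit]
    have hψexp : ψ^c ≤ Real.exp ((c:ℝ)*(ψ - 1)) := by
      calc ψ^c ≤ (Real.exp (ψ - 1))^c :=
            pow_le_pow_left₀ hψ0 (by linarith [Real.add_one_le_exp (ψ - 1)]) c
        _ = Real.exp ((c:ℝ)*(ψ - 1)) := by rw [← Real.exp_nat_mul]
    set x : ℝ := (c:ℝ)*(ψ - 1) with hx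
    have hψ1 : ψ - 1 = u*(2*A*(1-u) + B*u + u^2)/(A^2*B) := by
      rw [hψ]; field_simp; ring
    have hinner : 0 ≤ u*(2*A*(1-u) + B*u + u^2) := by
      have t1 : 0 ≤ 2*A*(1-u) := by nlinarith
      have t2 : 0 ≤ B*u := mul_nonneg hB0.le hu0
      have t3 : 0 ≤ u^2 := sq_nonneg u
      have : 0 ≤ 2*A*(1-u) + B*u + u^2 := by linarith
      exact mul_nonneg hu0 this
    have hx0 : 0 ≤ x := by
      rw [hx, hψ1]
      positivity
    have hx1 : x ≤ 1 := by
      rw [hx, hψ1, hcB]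
      have hrw : B * (u*(2*A*(1-u) + B*u + u^2)/(A^2*B)) =
          u*(2*A*(1-u) + B*u + u^2)/A^2 := by
        field_simp
      rw [hrw, div_le_one (by positivity)]
      nlinarith [mul_nonneg hA0.le (sq_nonneg (2*u-1)), mul_nonneg hB0.le (sq_nonneg u),
        sq_nonneg u, mul_le_of_le_one_right hB0.le (by nlinarith : u^2 ≤ 1),
        pow_le_one₀ hu0 hu1 (n := 3)]
    have hxpoly : x = β1*u + β2*u^2 + β3*u^3 := by
      rw [hx, hψ, hβ1, hβ2, hβ3, hcB, hα1, hAB]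
      have : (0:ℝ) < 2*B+2 := by linarith
      field_simp
      ring
    have hfin : ψ^c ≤ 1 + x + (3/4)*x^2 := hψexp.trans (exp_quad hx0 hx1)
    have hgu : g u = (1 + x + (3/4)*x^2) * (1 - u/A) := by
      simp only [hg]
      rw [hxpoly, hdivα u]
    rw [hgu]
    exact mul_le_mul_of_nonneg_right hfin huA
  have hif : IntervalIntegrable (fun u : ℝ => (1 - u/A)^(2*c+1) * (1 + u/B)^c) volume 0 1 := by
    apply Continuous.intervalIntegrable; fun_prop
  have hig : IntervalIntegrable g volume 0 1 := by
    apply Continuous.intervalIntegrable; fun_prop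
  have hmono := intervalIntegral.integral_mono_on (by norm_num : (0:ℝ) ≤ 1) hif hig hpt
  set p2 : ℝ := β2 + (3/4)*β1^2 with hp2
  set p3 : ℝ := β3 + (3/2)*β1*β2 with hp3
  set p4 : ℝ := (3/4)*β2^2 + (3/2)*β1*β3 with hp4
  set p5 : ℝ := (3/2)*β2*β3 with hp5
  set p6 : ℝ := (3/4)*β3^2 with hp6
  clear_value p2 p3 p4 p5 p6
  set G : ℝ → ℝ := fun u =>
    (u - u^2*α/2) + β1*(u^2/2 - u^3*α/3) + p2*(u^3/3 - u^4*α/4)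
      + p3*(u^4/4 - u^5*α/5) + p4*(u^5/5 - u^6*α/6) + p5*(u^6/6 - u^7*α/7)
      + p6*(u^7/7 - u^8*α/8) with hG
  have hderiv : ∀ u ∈ Set.uIcc (0:ℝ) 1, HasDerivAt G (g u) u := by
    intro u _
    have hp : ∀ k : ℕ, HasDerivAt (fun u : ℝ => u^(k+1)) (((k:ℝ)+1)*u^k) u := by
      intro k
      have := hasDerivAt_pow (k+1) u
      push_cast at this
      simpa using this
    have h2 := hp 1; have h3 := hp 2; have h4 := hp 3
    have h5 := hp 4; have h6 := hp 5; have h7 := hp 6; have h8 := hp 7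
    norm_num at h2 h3 h4 h5 h6 h7 h8
    have hD : HasDerivAt G
        ((1 - (2*u)*α/2) + β1*((2*u)/2 - (3*u^2)*α/3) + p2*((3*u^2)/3 - (4*u^3)*α/4)
          + p3*((4*u^3)/4 - (5*u^4)*α/5) + p4*((5*u^4)/5 - (6*u^5)*α/6)
          + p5*((6*u^5)/6 - (7*u^6)*α/7) + p6*((7*u^6)/7 - (8*u^7)*α/8)) u := by
      apply HasDerivAt.add
      apply HasDerivAt.add
      apply HasDerivAt.add
      apply HasDerivAt.add
      apply HasDerivAt.add
      apply HasDerivAt.add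
      · exact (hasDerivAt_id u).sub (((h2.mul_const α).div_const _))
      · exact ((h2.div_const _).sub ((h3.mul_const α).div_const _)).const_mul _
      · exact ((h3.div_const _).sub ((h4.mul_const α).div_const _)).const_mul _
      · exact ((h4.div_const _).sub ((h5.mul_const α).div_const _)).const_mul _
      · exact ((h5.div_const _).sub ((h6.mul_const α).div_const _)).const_mul _
      · exact ((h6.div_const _).sub ((h7.mul_const α).div_const _)).const_mul _
      · exact ((h7.div_const _).sub ((h8.mul_const α).div_const _)).const_mul _
    convert hD using 1
    simp only [hg, hp2, hp3, hp4, hp5, hp6]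
    ring
  have hint : ∫ u in (0:ℝ)..1, g u = G 1 - G 0 := by
    exact intervalIntegral.integral_eq_sub_of_hasDerivAt hderiv hig
  have hval : G 1 - G 0 =
      1 - (1456*B^3 + 5068*B^2 + 5648*B + 2041)/(1120*A^5) := by
    simp only [hG, hp2, hp3, hp4, hp5, hp6, hβ1, hβ2, hβ3]
    rw [hα1, hAB]
    have hB2 : (0:ℝ) < 2*B+2 := by linarith
    field_simp
    ring
  have hpos : 0 < (1456*B^3 + 5068*B^2 + 5648*B + 2041)/(1120*A^5) := by
    positivity
  calc (∫ u in (0:ℝ)..1, (1 - u/A)^(2*c+1) * (1 + u/B)^c) ≤ ∫ u in (0:ℝ)..1, g u := hmono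
    _ = G 1 - G 0 := hint
    _ < 1 := by rw [hval]; linarith


set_option maxHeartbeats 1600000 in
lemma keyident (n m c : ℕ) (hc : 1 ≤ c) (hnc : n = m + c + 1) :
    (∑ k ∈ Finset.range (m+1), (n.choose k : ℝ) * ((m:ℝ)/n)^k * (1 - (m:ℝ)/n)^(n-k))
      - (∑ k ∈ Finset.range (m+1+1), (n.choose k : ℝ) * (((m:ℝ)+1)/n)^k * (1 - ((m:ℝ)+1)/n)^(n-k))
    = (((c:ℝ)+1)/(n:ℝ) * (n.choose m : ℝ) * (((m:ℝ)+1)/n)^m * ((c:ℝ)/n)^c)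
      * ((∫ u in (0:ℝ)..1, (1 - u/((m:ℝ)+1))^m * (1 + u/(c:ℝ))^c) - 1) := by
  have hn1 : 1 ≤ n := by omega
  have hN0 : (0:ℝ) < n := by
    have : 0 < n := by omega
    exact_mod_cast this
  have hN0' : (n:ℝ) ≠ 0 := ne_of_gt hN0
  have hM1 : (0:ℝ) < (m:ℝ)+1 := by positivity
  have hM1' : (m:ℝ)+1 ≠ 0 := ne_of_gt hM1
  have hC0 : (0:ℝ) < (c:ℝ) := by exact_mod_cast hc
  have hC0' : (c:ℝ) ≠ 0 := ne_of_gt hC0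
  have hNcast : (n:ℝ) = (m:ℝ) + (c:ℝ) + 1 := by
    rw [hnc]; push_cast; ring
  set H : ℝ → ℝ := fun u => ∑ k ∈ Finset.range (m+1),
    (n.choose k : ℝ) * (((m:ℝ)+1-u)/n)^k * (((c:ℝ)+u)/n)^(n-k) with hH
  set K0 : ℝ := ((c:ℝ)+1)/(n:ℝ) * (n.choose m : ℝ) * (((m:ℝ)+1)/n)^m * ((c:ℝ)/n)^c with hK0
  have hderiv : ∀ u ∈ Set.uIcc (0:ℝ) 1,
      HasDerivAt H (K0 * ((1 - u/((m:ℝ)+1))^m * (1 + u/(c:ℝ))^c)) u := by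
    intro u _
    set S : ℕ → ℝ := fun k => (n.choose k : ℝ) * (k:ℝ) * (((m:ℝ)+1-u)/n)^(k-1)
      * (((c:ℝ)+u)/n)^(n-k) / n with hS
    set T : ℕ → ℝ := fun k => (n.choose k : ℝ) * ((n-k : ℕ):ℝ) * (((m:ℝ)+1-u)/n)^k
      * (((c:ℝ)+u)/n)^(n-k-1) / n with hT
    have hterm : ∀ k ∈ Finset.range (m+1), HasDerivAt
        (fun u : ℝ => (n.choose k : ℝ) * ((((m:ℝ)+1-u)/n)^k * (((c:ℝ)+u)/n)^(n-k)))
        (T k - S k) u := by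
      intro k hk
      simp only [Finset.mem_range] at hk
      have hkn : k < n := by omega
      have h1 : HasDerivAt (fun u : ℝ => ((m:ℝ)+1-u)/n) (-1/n) u := by
        have := ((hasDerivAt_id u).const_sub ((m:ℝ)+1)).div_const (n:ℝ)
        simpa using this
      have h2 : HasDerivAt (fun u : ℝ => ((c:ℝ)+u)/n) (1/n) u := by
        have := ((hasDerivAt_id u).const_add (c:ℝ)).div_const (n:ℝ)
        simpa using this
      have h1p := h1.pow k
      have h2p := h2.pow (n-k)
      have hnk1 : n - k - 1 = n - k - 1 := rfl
      have := (h1p.mul h2p).const_mul (n.choose k : ℝ)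
      refine this.congr_deriv ?_
      rw [hT, hS]
      simp only [Pi.pow_apply]
      ring
    have hsum : HasDerivAt H (∑ k ∈ Finset.range (m+1), (T k - S k)) u := by
      rw [hH]
      apply HasDerivAt.fun_sum
      intro k hk
      have := hterm k hk
      simpa only [mul_assoc] using this
    have hTS : ∀ k, k < m+1 → T k = S (k+1) := by
      intro k hk
      have hkn : k ≤ n := by omega
      have hchoose : ((n.choose (k+1)) : ℝ) * ((k:ℝ)+1) = (n.choose k : ℝ) * ((n:ℝ)-(k:ℝ)) := by
        have := Nat.choose_succ_right_eq n k
        have hcast := congrArg (Nat.cast : ℕ → ℝ) this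
        push_cast [Nat.cast_sub hkn] at hcast
        linarith [hcast]
      rw [hT, hS]
      simp only
      rw [show n - (k+1) = n - k - 1 from by omega, show (k+1) - 1 = k from rfl]
      rw [Nat.cast_sub hkn]
      push_cast
      linear_combination (-((((m:ℝ)+1-u)/n)^k * (((c:ℝ)+u)/n)^(n-k-1) / n)) * hchoose
    have htel : ∑ k ∈ Finset.range (m+1), (T k - S k) = T m := by
      calc ∑ k ∈ Finset.range (m+1), (T k - S k)
          = ∑ k ∈ Finset.range (m+1), (S (k+1) - S k) := by
            refine Finset.sum_congr rfl (fun k hk => ?_)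
            rw [hTS k (Finset.mem_range.mp hk)]
        _ = S (m+1) - S 0 := Finset.sum_range_sub S (m+1)
        _ = S (m+1) := by
            rw [hS]; simp
        _ = T m := (hTS m (by omega)).symm
    have hXm : (((m:ℝ)+1-u)/n)^m = (((m:ℝ)+1)/n)^m * (1-u/((m:ℝ)+1))^m := by
      rw [← mul_pow]
      congr 1
      field_simp
    have hYc : (((c:ℝ)+u)/n)^c = ((c:ℝ)/n)^c * (1+u/(c:ℝ))^c := by
      rw [← mul_pow]
      congr 1
      field_simp
    have hTm : T m = K0 * ((1 - u/((m:ℝ)+1))^m * (1 + u/(c:ℝ))^c) := by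
      rw [hT]
      simp only
      rw [show n - m - 1 = c from by omega,
          show ((n - m : ℕ):ℝ) = (c:ℝ)+1 from by
            rw [show n - m = c+1 from by omega]; push_cast; ring,
          hXm, hYc, hK0]
      ring
    rw [htel, hTm] at hsum
    exact hsum
  have hint0 : IntervalIntegrable
      (fun u : ℝ => K0 * ((1 - u/((m:ℝ)+1))^m * (1 + u/(c:ℝ))^c)) volume 0 1 := by
    apply Continuous.intervalIntegrable; fun_prop
  have hftc := intervalIntegral.integral_eq_sub_of_hasDerivAt hderiv hint0
  rw [intervalIntegral.integral_const_mul] at hftc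
  -- identify the two sums
  have hH1 : H 1 = ∑ k ∈ Finset.range (m+1),
      (n.choose k : ℝ) * ((m:ℝ)/n)^k * (1 - (m:ℝ)/n)^(n-k) := by
    rw [hH]
    refine Finset.sum_congr rfl (fun k hk => ?_)
    rw [show ((m:ℝ)+1-(1:ℝ))/n = (m:ℝ)/n from by ring_nf,
        show ((c:ℝ)+1)/(n:ℝ) = 1 - (m:ℝ)/n from by field_simp; linarith [hNcast]]
  have hH0 : ∑ k ∈ Finset.range (m+1+1),
      (n.choose k : ℝ) * (((m:ℝ)+1)/n)^k * (1 - ((m:ℝ)+1)/n)^(n-k) = H 0 + K0 := by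
    rw [Finset.sum_range_succ, hH]
    have hterm : ∀ k ∈ Finset.range (m+1),
        (n.choose k : ℝ) * (((m:ℝ)+1)/n)^k * (1 - ((m:ℝ)+1)/n)^(n-k)
        = (n.choose k : ℝ) * (((m:ℝ)+1-(0:ℝ))/n)^k * (((c:ℝ)+(0:ℝ))/n)^(n-k) := by
      intro k hk
      rw [show ((m:ℝ)+1-(0:ℝ))/n = ((m:ℝ)+1)/n from by ring_nf,
          show ((c:ℝ)+(0:ℝ))/(n:ℝ) = 1 - ((m:ℝ)+1)/n from by field_simp; linarith [hNcast]]
    rw [Finset.sum_congr rfl hterm]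
    congr 1
    -- top term = K0
    have hch : (n.choose (m+1) : ℝ) * ((m:ℝ)+1) = (n.choose m : ℝ) * ((c:ℝ)+1) := by
      have := Nat.choose_succ_right_eq n m
      have hcast := congrArg (Nat.cast : ℕ → ℝ) this
      push_cast [show n - m = c + 1 from by omega] at hcast
      push_cast
      linarith [hcast]
    rw [show 1 - ((m:ℝ)+1)/n = (c:ℝ)/n from by field_simp; linarith [hNcast],
        show n - (m+1) = c from by omega, hK0, pow_succ]
    linear_combination ((((m:ℝ)+1)/n)^m * (((c:ℝ))/n)^c / n) * hch
  rw [← hH1, hH0]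
  rw [show H 1 - (H 0 + K0) = (H 1 - H 0) - K0 from by ring, ← hftc]
  ring

/-- For every integer `n ≥ 2` and `0 ≤ m ≤ n-1`, one has `q m ≥ q (m+1)`
if and only if `m + 1/2 < 2n/3`, where `q m = P(B(n, m/n) ≤ m)`. -/
theorem chvatal_janson_monotonicity (n : ℕ) (hn : 2 ≤ n) (q : ℕ → ℝ)
    (hq : ∀ m, q m =
      ∑ k ∈ Finset.range (m + 1),
        (n.choose k : ℝ) * ((m : ℝ) / n) ^ k * (1 - (m : ℝ) / n) ^ (n - k)) :
    ∀ m ≤ n - 1, (q m ≥ q (m + 1) ↔ (m : ℝ) + 1 / 2 < 2 * (n : ℝ) / 3) := by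
  intro m hm
  have hN0 : (0:ℝ) < n := by
    have : 0 < n := by omega
    exact_mod_cast this
  by_cases hedge : m = n - 1
  · -- edge case m = n-1 : both sides false
    subst hedge
    have hm1 : n - 1 + 1 = n := by omega
    have hqn : q n = 1 := by
      rw [hq n]
      rw [show ((n:ℝ)/n) = 1 from div_self (ne_of_gt hN0)]
      rw [Finset.sum_eq_single n]
      · simp
      · intro k hk hkn
        have : k < n := by
          simp only [Finset.mem_range] at hk; omega
        have : n - k ≠ 0 := by omega
        simp [zero_pow this]
      · intro h
        exact absurd (Finset.self_mem_range_succ n) h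
    have hp : (0:ℝ) < ((n-1:ℕ):ℝ)/n := by
      have : (0:ℝ) < ((n-1:ℕ):ℝ) := by
        have : 0 < n - 1 := by omega
        exact_mod_cast this
      positivity
    have hqm : q (n-1) = 1 - (((n-1:ℕ):ℝ)/n)^n := by
      rw [hq (n-1), hm1]
      have hbinom := add_pow (((n-1:ℕ):ℝ)/n) (1 - ((n-1:ℕ):ℝ)/n) n
      rw [add_sub_cancel] at hbinom
      rw [one_pow] at hbinom
      have hsum : (1:ℝ) = ∑ k ∈ Finset.range (n+1),
          (((n-1:ℕ):ℝ)/n)^k * (1 - ((n-1:ℕ):ℝ)/n)^(n-k) * (n.choose k : ℝ) := hbinom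
      rw [Finset.sum_range_succ] at hsum
      simp only [Nat.sub_self, pow_zero, mul_one, Nat.choose_self, Nat.cast_one] at hsum
      have : ∑ k ∈ Finset.range n,
          (n.choose k : ℝ) * (((n-1:ℕ):ℝ)/n)^k * (1 - ((n-1:ℕ):ℝ)/n)^(n-k)
          = ∑ k ∈ Finset.range n,
          (((n-1:ℕ):ℝ)/n)^k * (1 - ((n-1:ℕ):ℝ)/n)^(n-k) * (n.choose k : ℝ) := by
        refine Finset.sum_congr rfl (fun k _ => by ring)
      rw [this]
      linarith [hsum]
    have hlt : q (n-1) < q (n-1+1) := by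
      rw [hm1, hqn, hqm]
      have : 0 < (((n-1:ℕ):ℝ)/n)^n := pow_pos hp n
      linarith
    constructor
    · intro hge
      exact absurd hlt (not_lt.mpr hge)
    · intro hrhs
      exfalso
      have hcast : ((n-1:ℕ):ℝ) = (n:ℝ) - 1 := by
        have : 1 ≤ n := by omega
        push_cast [Nat.cast_sub this]
        ring
      rw [hcast] at hrhs
      have hn2 : (2:ℝ) ≤ n := by exact_mod_cast hn
      linarith
  · -- main case : m + c + 1 = n with c ≥ 1
    have hmn : m + 2 ≤ n := by omega
    set c : ℕ := n - m - 1 with hc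
    have hc1 : 1 ≤ c := by omega
    have hnc : n = m + c + 1 := by omega
    have hC0 : (0:ℝ) < (c:ℝ) := by exact_mod_cast hc1
    set I : ℝ := ∫ u in (0:ℝ)..1, (1 - u/((m:ℝ)+1))^m * (1 + u/(c:ℝ))^c with hI
    set K0 : ℝ := ((c:ℝ)+1)/(n:ℝ) * (n.choose m : ℝ) * (((m:ℝ)+1)/n)^m * ((c:ℝ)/n)^c with hK0
    have hK0pos : 0 < K0 := by
      rw [hK0]
      have hch : 0 < (n.choose m : ℝ) := by
        have : 0 < n.choose m := Nat.choose_pos (by omega)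
        exact_mod_cast this
      positivity
    have hdiff : q m - q (m+1) = K0 * (I - 1) := by
      rw [hq m, hq (m+1)]
      have := keyident n m c hc1 hnc
      push_cast at this ⊢
      rw [hK0, hI]
      exact this
    have hiff1 : q m ≥ q (m+1) ↔ 1 ≤ I := by
      constructor
      · intro h
        have h0 : 0 ≤ K0 * (I - 1) := by rw [← hdiff]; linarith
        nlinarith [hK0pos]
      · intro h
        have : 0 ≤ K0 * (I - 1) := mul_nonneg hK0pos.le (by linarith)
        rw [← hdiff] at this
        linarith
    have hNcast : (n:ℝ) = (m:ℝ) + (c:ℝ) + 1 := by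
      rw [hnc]; push_cast; ring
    have hiff2 : ((m:ℝ) + 1/2 < 2*(n:ℝ)/3) ↔ m ≤ 2*c := by
      constructor
      · intro h
        have : (m:ℝ) < 2*(c:ℝ) + 1/2 := by
          rw [hNcast] at h
          linarith
        have : (m:ℝ) < ((2*c+1 : ℕ):ℝ) := by push_cast; linarith
        have : m < 2*c+1 := by exact_mod_cast this
        omega
      · intro h
        have : (m:ℝ) ≤ ((2*c : ℕ):ℝ) := by exact_mod_cast h
        push_cast at this
        rw [hNcast]
        linarith
    rw [hiff1, hiff2]
    constructor
    · -- 1 ≤ I → m ≤ 2c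
      intro h
      by_contra hcon
      have hble : 2*c+1 ≤ m := by omega
      -- I ≤ famB integral < 1
      have hpt : ∀ u ∈ Set.Icc (0:ℝ) 1,
          (1 - u/((m:ℝ)+1))^m * (1 + u/(c:ℝ))^c
          ≤ (1 - u/(2*(c:ℝ)+2))^(2*c+1) * (1 + u/(c:ℝ))^c := by
        intro u hu
        obtain ⟨hu0, hu1⟩ := hu
        have := bmono u hu0 hu1 hble
        have hrw : ((2*c+1 : ℕ):ℝ) + 1 = 2*(c:ℝ)+2 := by push_cast; ring
        rw [hrw] at this
        have hnn : (0:ℝ) ≤ (1 + u/(c:ℝ))^c := by positivity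
        exact mul_le_mul_of_nonneg_right this hnn
      have hi1 : IntervalIntegrable
          (fun u : ℝ => (1 - u/((m:ℝ)+1))^m * (1 + u/(c:ℝ))^c) volume 0 1 := by
        apply Continuous.intervalIntegrable; fun_prop
      have hi2 : IntervalIntegrable
          (fun u : ℝ => (1 - u/(2*(c:ℝ)+2))^(2*c+1) * (1 + u/(c:ℝ))^c) volume 0 1 := by
        apply Continuous.intervalIntegrable; fun_prop
      have hmono := intervalIntegral.integral_mono_on (by norm_num : (0:ℝ) ≤ 1) hi1 hi2 hpt
      have := famB c hc1
      rw [hI] at h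
      linarith
    · -- m ≤ 2c → 1 ≤ I
      intro h
      have hpt : ∀ u ∈ Set.Icc (0:ℝ) 1,
          (1 - u/(2*(c:ℝ)+1))^(2*c) * (1 + u/(c:ℝ))^c
          ≤ (1 - u/((m:ℝ)+1))^m * (1 + u/(c:ℝ))^c := by
        intro u hu
        obtain ⟨hu0, hu1⟩ := hu
        have := bmono u hu0 hu1 h
        have hrw : ((2*c : ℕ):ℝ) + 1 = 2*(c:ℝ)+1 := by push_cast; ring
        rw [hrw] at this
        have hnn : (0:ℝ) ≤ (1 + u/(c:ℝ))^c := by positivity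
        exact mul_le_mul_of_nonneg_right this hnn
      have hi1 : IntervalIntegrable
          (fun u : ℝ => (1 - u/(2*(c:ℝ)+1))^(2*c) * (1 + u/(c:ℝ))^c) volume 0 1 := by
        apply Continuous.intervalIntegrable; fun_prop
      have hi2 : IntervalIntegrable
          (fun u : ℝ => (1 - u/((m:ℝ)+1))^m * (1 + u/(c:ℝ))^c) volume 0 1 := by
        apply Continuous.intervalIntegrable; fun_prop
      have hmono := intervalIntegral.integral_mono_on (by norm_num : (0:ℝ) ≤ 1) hi1 hi2 hpt
      have := famA c hc1
      rw [hI]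
      linarith
end

section
/- Let n ≥ 2 be an integer and let m be an integer with 0 ≤ m ≤ n−2. Then q_m ≥ q_{m+1} if and only if ∫_{m/n}^{(m+1)/n} x^{m+1} (1−x)^{n−m−2} dx ≥ b_m, where b_m = (m/n)^{m+1} (1 − m/n)^{n−m−1} / (n−m−1). -/
lemma ftc_pow (r s : ℕ) (a b : ℝ) :
    (∫ x in a..b, (((r:ℝ)+1) * x^r * (1-x)^(s+1) - ((s:ℝ)+1) * x^(r+1) * (1-x)^s))
      = b^(r+1)*(1-b)^(s+1) - a^(r+1)*(1-a)^(s+1) := by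
  apply intervalIntegral.integral_eq_sub_of_hasDerivAt
  · intro x _
    have h1 : HasDerivAt (fun x : ℝ => x^(r+1)) (((r:ℝ)+1) * x^r) x := by
      simpa using hasDerivAt_pow (r+1) x
    have h2 : HasDerivAt (fun x : ℝ => (1-x)^(s+1)) (-(((s:ℝ)+1) * (1-x)^s)) x := by
      have := (hasDerivAt_pow (s+1) (1-x)).comp x (((hasDerivAt_id x).const_sub 1))
      simpa [Function.comp_def] using this
    have := h1.mul h2
    refine this.congr_deriv (Eq.symm ?_)
    ring
  · apply Continuous.intervalIntegrable
    continuity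

lemma hasDerivAt_binomSum (n m : ℕ) (hm : m + 2 ≤ n) (t : ℝ) :
    HasDerivAt (fun t : ℝ => ∑ k ∈ Finset.range (m+1), (n.choose k : ℝ) * t^k * (1-t)^(n-k))
      (-(((n-m : ℕ) : ℝ) * (n.choose m) * t^m * (1-t)^(n-m-1))) t := by
  set F : ℕ → ℝ := fun k => Nat.rec 0
    (fun k' _ => -(((n-k' : ℕ) : ℝ) * (n.choose k') * t^k' * (1-t)^(n-k'-1))) k with hF
  have hF0 : F 0 = 0 := rfl
  have hFs : ∀ k, F (k+1) = -(((n-k : ℕ) : ℝ) * (n.choose k) * t^k * (1-t)^(n-k-1)) :=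
    fun k => rfl
  have key : ∀ k ∈ Finset.range (m+1),
      HasDerivAt (fun t : ℝ => (n.choose k : ℝ) * t^k * (1-t)^(n-k)) (F (k+1) - F k) t := by
    intro k hk
    have hk' : k ≤ m := Finset.mem_range_succ_iff.mp hk
    have hkn : k + 2 ≤ n := by omega
    have h1 : HasDerivAt (fun t : ℝ => (n.choose k : ℝ) * t^k)
        ((n.choose k : ℝ) * ((k:ℝ) * t^(k-1))) t := by
      simpa using (hasDerivAt_pow k t).const_mul (n.choose k : ℝ)
    have h2 : HasDerivAt (fun t : ℝ => (1-t)^(n-k)) (-(((n-k : ℕ):ℝ) * (1-t)^(n-k-1))) t := by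
      have := (hasDerivAt_pow (n-k) (1-t)).comp t ((hasDerivAt_id t).const_sub 1)
      simpa [Function.comp_def] using this
    have hmul := h1.mul h2
    refine hmul.congr_deriv (Eq.symm ?_)
    rw [hFs k]
    cases k with
    | zero => simp [hF0]
    | succ k' =>
      rw [hFs k']
      have hch : (n.choose (k'+1) : ℝ) * ((k':ℝ)+1) = (n.choose k' : ℝ) * ((n-k' : ℕ) : ℝ) := by
        exact_mod_cast congrArg (Nat.cast : ℕ → ℝ) (Nat.choose_succ_right_eq n k')
      have e1 : n - k' - 1 = n - (k'+1) := by omega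
      have e3 : k' + 1 - 1 = k' := rfl
      rw [e1, e3]
      push_cast
      linear_combination (-(t^k' * (1-t)^(n-(k'+1)))) * hch
  have := HasDerivAt.fun_sum key
  rw [Finset.sum_range_sub F] at this
  simpa [hFs, hF0] using this

/-- For `n ≥ 2` and `0 ≤ m ≤ n-2`, one has `q m ≥ q (m+1)` iff
`∫_{m/n}^{(m+1)/n} x^{m+1} (1-x)^{n-m-2} dx ≥ b_m`, where
`b_m = (m/n)^{m+1} (1-m/n)^{n-m-1} / (n-m-1)`. -/
theorem qm_ge_qm1_iff_integral (n : ℕ) (hn : 2 ≤ n) (q : ℕ → ℝ)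
    (hq : ∀ m, q m =
      ∑ k ∈ Finset.range (m + 1),
        (n.choose k : ℝ) * ((m : ℝ) / n) ^ k * (1 - (m : ℝ) / n) ^ (n - k)) :
    ∀ m ≤ n - 2,
      (q m ≥ q (m + 1) ↔
        (∫ x in ((m : ℝ) / n)..(((m : ℝ) + 1) / n),
            x ^ (m + 1) * (1 - x) ^ (n - m - 2)) ≥
          ((m : ℝ) / n) ^ (m + 1) * (1 - (m : ℝ) / n) ^ (n - m - 1) /
            ((n : ℝ) - m - 1)) := by
  intro m hm
  have hm2 : m + 2 ≤ n := by omega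
  set p : ℝ := (m : ℝ) / n with hp
  set a : ℝ := ((m : ℝ) + 1) / n with ha
  set I : ℝ := ∫ x in p..a, x ^ (m + 1) * (1 - x) ^ (n - m - 2) with hI
  set J : ℝ := ∫ x in p..a, x ^ m * (1 - x) ^ (n - m - 1) with hJdef
  set G : ℝ → ℝ := fun t => ∑ k ∈ Finset.range (m+1),
      (n.choose k : ℝ) * t^k * (1-t)^(n-k) with hG
  -- FTC for the binomial sum
  have hI1 : (∫ t in p..a, -(((n-m : ℕ) : ℝ) * (n.choose m) * t^m * (1-t)^(n-m-1)))
      = G a - G p := by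
    apply intervalIntegral.integral_eq_sub_of_hasDerivAt
    · exact fun t _ => hasDerivAt_binomSum n m hm2 t
    · apply Continuous.intervalIntegrable; fun_prop
  have hJ1 : (∫ t in p..a, -(((n-m : ℕ) : ℝ) * (n.choose m) * t^m * (1-t)^(n-m-1)))
      = -(((n-m : ℕ) : ℝ) * (n.choose m)) * J := by
    rw [hJdef, ← intervalIntegral.integral_const_mul]
    congr 1; funext t; ring
  -- the integration by parts identity
  have hFTC := ftc_pow m (n-m-2) p a
  have e4 : n - m - 2 + 1 = n - m - 1 := by omega
  rw [e4] at hFTC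
  have ec : ((n-m-2 : ℕ) : ℝ) + 1 = ((n-m-1 : ℕ) : ℝ) := by
    exact_mod_cast congrArg (Nat.cast : ℕ → ℝ) e4
  rw [ec] at hFTC
  have hsplit : (∫ x in p..a, (((m:ℝ)+1) * x^m * (1-x)^(n-m-1)
        - ((n-m-1 : ℕ):ℝ) * x^(m+1) * (1-x)^(n-m-2)))
      = ((m:ℝ)+1) * J - ((n-m-1 : ℕ):ℝ) * I := by
    rw [intervalIntegral.integral_sub]
    · congr 1
      · rw [hJdef, ← intervalIntegral.integral_const_mul]; congr 1; funext t; ring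
      · rw [hI, ← intervalIntegral.integral_const_mul]; congr 1; funext t; ring
    · apply Continuous.intervalIntegrable; fun_prop
    · apply Continuous.intervalIntegrable; fun_prop
  rw [hsplit] at hFTC
  -- q m and q (m+1)
  have hqm : q m = G p := hq m
  have hqm1 : q (m+1) = G a + (n.choose (m+1) : ℝ) * a^(m+1) * (1-a)^(n-m-1) := by
    have := hq (m+1)
    rw [Finset.sum_range_succ] at this
    rw [this]
    have hcast : ((m+1 : ℕ) : ℝ) = (m : ℝ) + 1 := by push_cast; ring
    rw [show n - (m+1) = n - m - 1 from by omega]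
    simp only [hcast, ha]
    rfl
  -- choose identity
  have hch : (n.choose (m+1) : ℝ) * ((m:ℝ)+1) = (n.choose m : ℝ) * ((n-m : ℕ) : ℝ) := by
    exact_mod_cast congrArg (Nat.cast : ℕ → ℝ) (Nat.choose_succ_right_eq n m)
  -- main identity
  have main : q m - q (m+1) = (n.choose (m+1) : ℝ) *
      (((n-m-1 : ℕ):ℝ) * I - p^(m+1) * (1-p)^(n-m-1)) := by
    have h1 : (n.choose (m+1) : ℝ) * (((m:ℝ)+1) * J)
        = ((n-m : ℕ) : ℝ) * (n.choose m) * J := by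
      linear_combination J * hch
    have h2 : ((n-m : ℕ) : ℝ) * (n.choose m) * J = G p - G a := by
      rw [hJ1] at hI1; linarith [hI1]
    linear_combination hqm - hqm1 - h2 - h1 + (n.choose (m+1) : ℝ) * hFTC
  -- positivity
  have hc1 : (0:ℝ) < (n.choose (m+1) : ℝ) := by
    exact_mod_cast Nat.choose_pos (by omega : m+1 ≤ n)
  have hdn : ((n-m-1 : ℕ) : ℝ) = (n : ℝ) - m - 1 := by
    rw [show n - m - 1 = n - (m+1) from by omega, Nat.cast_sub (by omega : m+1 ≤ n)]
    push_cast; ring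
  have hdnpos : (0:ℝ) < (n : ℝ) - m - 1 := by
    rw [← hdn]; exact_mod_cast Nat.lt_of_lt_of_le (by omega) (le_refl (n-m-1))
  have hiff : (q m ≥ q (m+1)) ↔ 0 ≤ (n.choose (m+1) : ℝ) *
      (((n-m-1 : ℕ):ℝ) * I - p^(m+1) * (1-p)^(n-m-1)) := by
    rw [ge_iff_le, ← sub_nonneg, main]
  rw [hiff, ge_iff_le, div_le_iff₀ hdnpos]
  rw [hdn]
  constructor
  · intro h; nlinarith
  · intro h; nlinarith
end

section
/- Let n ≥ 3 be an integer and let m be an integer with 1 ≤ m ≤ n−2. Then q_m ≥ q_{m+1} if and only if ∫_{0}^{1} (1 + t/m)^{m+1} (1 − t/(n−m))^{n−m−2} dt ≥ (n−m)/(n−m−1). -/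
open intervalIntegral Finset

-- derivative of partial binomial CDF sum
lemma aux_hasDerivAt (n : ℕ) : ∀ m, m < n → ∀ p : ℝ,
    HasDerivAt (fun p : ℝ => ∑ k ∈ Finset.range (m + 1),
        (n.choose k : ℝ) * p ^ k * (1 - p) ^ (n - k))
      (-((n : ℝ) * ((n - 1).choose m : ℝ) * p ^ m * (1 - p) ^ (n - 1 - m))) p := by
  intro m
  induction m with
  | zero =>
    intro hlt p
    have h1 : HasDerivAt (fun q : ℝ => (1 - q) ^ n) ((n : ℝ) * (1 - p) ^ (n - 1) * (-1)) p :=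
      ((hasDerivAt_id p).const_sub 1).pow n
    have hfun : (fun p : ℝ => ∑ k ∈ Finset.range 1,
        (n.choose k : ℝ) * p ^ k * (1 - p) ^ (n - k)) = fun q : ℝ => (1 - q) ^ n := by
      funext q; simp
    rw [hfun]
    convert h1 using 1
    simp
  | succ m ih =>
    intro hlt p
    have ih' := ih (by omega) p
    have hpow : HasDerivAt (fun q : ℝ => q ^ (m + 1)) (((m : ℝ) + 1) * p ^ m) p := by
      simpa using hasDerivAt_pow (m + 1) p
    have hq2 : HasDerivAt (fun q : ℝ => (1 - q) ^ (n - (m + 1)))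
        (((n - (m + 1) : ℕ) : ℝ) * (1 - p) ^ (n - (m + 1) - 1) * (-1)) p :=
      ((hasDerivAt_id p).const_sub 1).pow _
    have hterm := (hpow.mul hq2).const_mul ((n.choose (m + 1) : ℝ))
    have hfun : (fun p : ℝ => ∑ k ∈ Finset.range (m + 2),
        (n.choose k : ℝ) * p ^ k * (1 - p) ^ (n - k)) =
        fun q : ℝ => (∑ k ∈ Finset.range (m + 1),
          (n.choose k : ℝ) * q ^ k * (1 - q) ^ (n - k)) +
          (n.choose (m + 1) : ℝ) * (q ^ (m + 1) * (1 - q) ^ (n - (m + 1))) := by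
      funext q; rw [Finset.sum_range_succ]; ring
    rw [hfun]
    have := ih'.add hterm
    refine this.congr_deriv ?_
    symm
    -- algebraic identity
    have hA : ((m : ℝ) + 1) * (n.choose (m + 1) : ℝ) = (n : ℝ) * ((n - 1).choose m : ℝ) := by
      have h0 := Nat.add_one_mul_choose_eq (n - 1) m
      simp only [Nat.succ_eq_add_one, Nat.sub_add_cancel (by omega : 1 ≤ n)] at h0
      have h0' : (m + 1) * n.choose (m + 1) = n * (n - 1).choose m := by
        rw [Nat.mul_comm]; exact h0.symm
      exact_mod_cast h0' 
    have hB : ((n - (m + 1) : ℕ) : ℝ) * (n.choose (m + 1) : ℝ) =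
        (n : ℝ) * ((n - 1).choose (m + 1) : ℝ) := by
      have h1 := Nat.choose_succ_right_eq n (m + 1)
      have h2 := Nat.add_one_mul_choose_eq (n - 1) (m + 1)
      simp only [Nat.succ_eq_add_one, Nat.sub_add_cancel (by omega : 1 ≤ n)] at h2
      have h3 : (n - (m + 1)) * n.choose (m + 1) = n * (n - 1).choose (m + 1) := by
        rw [h2, h1]; exact Nat.mul_comm _ _
      exact_mod_cast h3
    have e1 : n - 1 - m = n - (m + 1) := by omega
    have e2 : n - (m + 1) - 1 = n - 1 - (m + 1) := by omega
    rw [e1, e2]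
    linear_combination (p ^ (m + 1) * (1 - p) ^ (n - 1 - (m + 1))) * hB -
      (p ^ m * (1 - p) ^ (n - (m + 1))) * hA

lemma aux_choose (n k : ℕ) (hn : 1 ≤ n) :
    (n - k) * n.choose k = n * (n - 1).choose k := by
  have h1 := Nat.choose_succ_right_eq n k
  have h2 := Nat.add_one_mul_choose_eq (n - 1) k
  simp only [Nat.succ_eq_add_one, Nat.sub_add_cancel hn] at h2
  rw [h2, Nat.mul_comm, ← h1]

/-- For `n ≥ 3` and `1 ≤ m ≤ n-2`, one has `q m ≥ q (m+1)` iff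
`∫_0^1 (1 + t/m)^{m+1} (1 - t/(n-m))^{n-m-2} dt ≥ (n-m)/(n-m-1)`. -/
theorem qm_ge_qm1_iff_integral_t (n : ℕ) (hn : 3 ≤ n) (q : ℕ → ℝ)
    (hq : ∀ m, q m =
      ∑ k ∈ Finset.range (m + 1),
        (n.choose k : ℝ) * ((m : ℝ) / n) ^ k * (1 - (m : ℝ) / n) ^ (n - k)) :
    ∀ m, 1 ≤ m → m ≤ n - 2 →
      (q m ≥ q (m + 1) ↔
        (∫ t in (0:ℝ)..1,
            (1 + t / (m : ℝ)) ^ (m + 1) *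
              (1 - t / ((n : ℝ) - m)) ^ (n - m - 2)) ≥
          ((n : ℝ) - m) / ((n : ℝ) - m - 1)) := by
  intro m hm1 hm2
  have hmn : m + 2 ≤ n := by omega
  set e : ℕ := n - m - 2 with he
  have hne : n = m + 2 + e := by omega
  -- real positivity facts
  have hm0 : (0:ℝ) < (m:ℝ) := by exact_mod_cast hm1
  have hn0 : (0:ℝ) < (n:ℝ) := by positivity
  have hnm : (n:ℝ) - m = (e:ℝ) + 2 := by
    rw [hne]; push_cast; ring
  have hv0 : (0:ℝ) < (n:ℝ) - m := by rw [hnm]; positivity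
  have hch : (0:ℝ) < (n.choose (m+1) : ℝ) := by
    exact_mod_cast Nat.choose_pos (by omega : m + 1 ≤ n)
  have hm0' : (m:ℝ) ≠ 0 := ne_of_gt hm0
  have hn0' : (n:ℝ) ≠ 0 := ne_of_gt hn0
  have hv0' : (n:ℝ) - (m:ℝ) ≠ 0 := ne_of_gt hv0
  -- abbreviations
  obtain ⟨I, hI⟩ : ∃ I : ℝ, I = ∫ p in ((m:ℝ)/n)..(((m:ℝ)+1)/n),
      p ^ (m+1) * (1-p) ^ e := ⟨_, rfl⟩
  obtain ⟨A, hA⟩ : ∃ A : ℝ, A = ∫ t in (0:ℝ)..1,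
      (1 + t / (m : ℝ)) ^ (m + 1) * (1 - t / ((n : ℝ) - m)) ^ e := ⟨_, rfl⟩
  rw [← hA]
  -- FTC step
  have key := aux_hasDerivAt n (m+1) (by omega)
  have hcont : Continuous (fun p : ℝ =>
      -((n : ℝ) * ((n - 1).choose (m+1) : ℝ) * p ^ (m+1) * (1 - p) ^ (n - 1 - (m+1)))) := by
    fun_prop
  have hftc := intervalIntegral.integral_eq_sub_of_hasDerivAt
      (f := fun p : ℝ => ∑ k ∈ Finset.range (m + 2),
        (n.choose k : ℝ) * p ^ k * (1 - p) ^ (n - k))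
      (f' := fun p : ℝ =>
        -((n : ℝ) * ((n - 1).choose (m+1) : ℝ) * p ^ (m+1) * (1 - p) ^ (n - 1 - (m+1))))
      (a := ((m:ℝ)+1)/n) (b := (m:ℝ)/n)
      (fun x _ => key x) (hcont.intervalIntegrable _ _)
  -- rewrite the integral from FTC in terms of I
  have hee : n - 1 - (m+1) = e := by omega
  have hchoose : ((e:ℝ)+1) * (n.choose (m+1):ℝ) = (n:ℝ) * (((n:ℕ)-1).choose (m+1):ℝ) := by
    have h := aux_choose n (m+1) (by omega)
    have h2 : n - (m+1) = e + 1 := by omega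
    rw [h2] at h
    exact_mod_cast h
  have hSab : (∑ k ∈ Finset.range (m + 2),
        (n.choose k : ℝ) * ((m:ℝ)/n) ^ k * (1 - (m:ℝ)/n) ^ (n - k))
      - (∑ k ∈ Finset.range (m + 2),
        (n.choose k : ℝ) * (((m:ℝ)+1)/n) ^ k * (1 - ((m:ℝ)+1)/n) ^ (n - k))
      = ((e:ℝ)+1) * (n.choose (m+1):ℝ) * I := by
    rw [← hftc, hI,
      intervalIntegral.integral_symm ((m:ℝ)/n) (((m:ℝ)+1)/n),
      ← intervalIntegral.integral_neg, ← intervalIntegral.integral_const_mul]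
    apply intervalIntegral.integral_congr
    intro p _
    simp only [neg_neg, hee]
    rw [← hchoose]
    ring
  -- q values in terms of the sums
  have hq1 : q (m+1) = ∑ k ∈ Finset.range (m + 2),
      (n.choose k : ℝ) * (((m:ℝ)+1)/n) ^ k * (1 - ((m:ℝ)+1)/n) ^ (n - k) := by
    rw [hq (m+1)]
    apply Finset.sum_congr rfl
    intro k _
    push_cast
    ring
  have hem : n - (m+1) = e + 1 := by omega
  have hq0 : q m = (∑ k ∈ Finset.range (m + 2),
      (n.choose k : ℝ) * ((m:ℝ)/n) ^ k * (1 - (m:ℝ)/n) ^ (n - k))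
      - (n.choose (m+1) : ℝ) * ((m:ℝ)/n) ^ (m+1) * (1 - (m:ℝ)/n) ^ (e+1) := by
    have hs := Finset.sum_range_succ
      (fun k => (n.choose k : ℝ) * ((m:ℝ)/n) ^ k * (1 - (m:ℝ)/n) ^ (n - k)) (m+1)
    rw [hq m, show m + 2 = m + 1 + 1 from rfl, hs, hem]
    ring
  -- pointwise identity for the change of variables
  have hpt : ∀ t : ℝ, (1 + t / (m : ℝ)) ^ (m + 1) * (1 - t / ((n : ℝ) - m)) ^ e
      = ((n:ℝ)^(n-1) / ((m:ℝ)^(m+1) * ((n:ℝ)-m)^e)) *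
        (((t+(m:ℝ))/n)^(m+1) * (1 - (t+(m:ℝ))/n)^e) := by
    intro t
    have h1 : 1 + t / (m:ℝ) = (t + m) / m := by field_simp; ring
    have h2 : 1 - t / ((n:ℝ) - m) = ((n:ℝ) - m - t) / ((n:ℝ) - m) := by field_simp
    have h3 : 1 - (t + (m:ℝ))/n = ((n:ℝ) - m - t) / n := by field_simp; ring
    rw [h1, h2, h3, show (n:ℕ) - 1 = (m+1) + e from by omega, pow_add,
      div_pow, div_pow, div_pow, div_pow]
    field_simp
    rw [div_pow, pow_add]
    field_simp
    ring
  -- change of variables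
  have hcomp : (∫ t in (0:ℝ)..1, ((t+(m:ℝ))/n)^(m+1) * (1 - (t+(m:ℝ))/n)^e)
      = (n:ℝ) * I := by
    have h1 : (∫ t in (0:ℝ)..1, ((t+(m:ℝ))/n)^(m+1) * (1 - (t+(m:ℝ))/n)^e)
        = ∫ x in (0+(m:ℝ))..(1+(m:ℝ)), (x/n)^(m+1) * (1 - x/n)^e :=
      intervalIntegral.integral_comp_add_right
        (fun x : ℝ => (x/(n:ℝ))^(m+1) * (1 - x/n)^e) (m:ℝ)
    have h2 : (∫ x in (0+(m:ℝ))..(1+(m:ℝ)), (x/n)^(m+1) * (1 - x/n)^e)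
        = (n:ℝ) • ∫ p in ((0+(m:ℝ))/n)..((1+(m:ℝ))/n), p^(m+1) * (1-p)^e :=
      intervalIntegral.integral_comp_div
        (fun p : ℝ => p^(m+1) * (1-p)^e) hn0'
    rw [h1, h2, hI, smul_eq_mul]
    norm_num [add_comm]
  have hJI : A = ((n:ℝ)^(n-1) / ((m:ℝ)^(m+1) * ((n:ℝ)-m)^e)) * ((n:ℝ) * I) := by
    rw [hA, ← hcomp, ← intervalIntegral.integral_const_mul]
    apply intervalIntegral.integral_congr
    intro t _
    exact hpt t
  have hIA : I = (m:ℝ)^(m+1) * ((n:ℝ)-m)^e / (n:ℝ)^n * A := by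
    rw [hJI, show (n:ℕ) = ((n:ℕ)-1) + 1 from by omega]
    field_simp
    ring
    rw [Nat.add_sub_cancel_left]
  -- the difference
  have h1a : 1 - (m:ℝ)/n = ((n:ℝ)-m)/n := by field_simp
  have hdiff : q m - q (m+1) =
      (n.choose (m+1):ℝ) * (m:ℝ)^(m+1) * ((n:ℝ)-m)^e / (n:ℝ)^n *
        (((e:ℝ)+1) * A - ((n:ℝ)-m)) := by
    rw [hq0, hq1]
    have : (∑ k ∈ Finset.range (m + 2),
        (n.choose k : ℝ) * ((m:ℝ)/n) ^ k * (1 - (m:ℝ)/n) ^ (n - k))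
      - (n.choose (m+1) : ℝ) * ((m:ℝ)/n) ^ (m+1) * (1 - (m:ℝ)/n) ^ (e+1)
      - (∑ k ∈ Finset.range (m + 2),
        (n.choose k : ℝ) * (((m:ℝ)+1)/n) ^ k * (1 - ((m:ℝ)+1)/n) ^ (n - k))
      = ((e:ℝ)+1) * (n.choose (m+1):ℝ) * I
        - (n.choose (m+1) : ℝ) * ((m:ℝ)/n) ^ (m+1) * (1 - (m:ℝ)/n) ^ (e+1) := by
      rw [← hSab]; ring
    rw [this, hIA, h1a, div_pow, div_pow,
      show (n:ℕ) = (m+1) + (e+1) from by omega, pow_add]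
    field_simp
    ring
  -- conclude
  have hK : (0:ℝ) < (n.choose (m+1):ℝ) * (m:ℝ)^(m+1) * ((n:ℝ)-m)^e / (n:ℝ)^n := by
    positivity
  have he1 : (n:ℝ) - m - 1 = (e:ℝ) + 1 := by rw [hnm]; ring
  constructor
  · intro hge
    have h0 : 0 ≤ q m - q (m+1) := by linarith
    rw [hdiff] at h0
    have h1 : 0 ≤ ((e:ℝ)+1) * A - ((n:ℝ)-m) := nonneg_of_mul_nonneg_right h0 hK
    rw [ge_iff_le, he1, div_le_iff₀ (by positivity : (0:ℝ) < (e:ℝ)+1)]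
    linarith
  · intro hge
    rw [ge_iff_le, he1, div_le_iff₀ (by positivity : (0:ℝ) < (e:ℝ)+1)] at hge
    have h1 : 0 ≤ ((e:ℝ)+1) * A - ((n:ℝ)-m) := by linarith
    have h0 : 0 ≤ q m - q (m+1) := by
      rw [hdiff]; exact mul_nonneg (le_of_lt hK) h1
    linarith
end

section
/- Let n ≥ 2 be an integer and let m be an integer with 0 ≤ m ≤ n−2. Then q_m ≥ q_{m+1} if and only if ∫_{0}^{1} (1 − v/(m+1))^{m} (1 + v/(n−m−1))^{n−m−1} dv ≥ 1. -/
open Finset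

/-- Derivative of the binomial CDF polynomial. -/
lemma binCDF_hasDerivAt (n : ℕ) (p : ℝ) :
    ∀ m, m + 1 ≤ n →
    HasDerivAt (fun p : ℝ => ∑ k ∈ Finset.range (m+1), (n.choose k : ℝ) * p^k * (1-p)^(n-k))
      (-((n : ℝ) * ((n-1).choose m)) * (p^m * (1-p)^(n-1-m))) p := by
  intro m
  induction m with
  | zero =>
    intro h
    have hfun : (fun p : ℝ => ∑ k ∈ Finset.range 1, (n.choose k : ℝ) * p^k * (1-p)^(n-k))
        = fun p : ℝ => (1-p)^n := by
      funext p; simp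
    rw [hfun]
    have hd : HasDerivAt (fun p : ℝ => (1-p)^n) ((n:ℝ) * (1-p)^(n-1) * (-1)) p :=
      by simpa using ((hasDerivAt_id p).const_sub 1).fun_pow n
    convert hd using 1
    simp
  | succ m ih =>
    intro h
    have hfun : (fun p : ℝ => ∑ k ∈ Finset.range (m+2), (n.choose k : ℝ) * p^k * (1-p)^(n-k))
        = fun p : ℝ => (∑ k ∈ Finset.range (m+1), (n.choose k : ℝ) * p^k * (1-p)^(n-k))
            + (n.choose (m+1) : ℝ) * p^(m+1) * (1-p)^(n-(m+1)) := by
      funext p; rw [Finset.sum_range_succ]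
    rw [hfun]
    have h1 : HasDerivAt (fun p : ℝ => p^(m+1)) ((((m:ℝ)+1)) * p^m) p := by
      simpa using hasDerivAt_pow (m+1) p
    have h2 : HasDerivAt (fun p : ℝ => (1-p)^(n-(m+1)))
        (((n-(m+1) : ℕ):ℝ) * (1-p)^(n-(m+1)-1) * (-1)) p :=
      by simpa using ((hasDerivAt_id p).const_sub 1).fun_pow (n-(m+1))
    have hterm : HasDerivAt (fun p : ℝ => (n.choose (m+1) : ℝ) * p^(m+1) * (1-p)^(n-(m+1)))
        ((n.choose (m+1) : ℝ) * ((((m:ℝ)+1) * p^m) * (1-p)^(n-(m+1))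
          + p^(m+1) * ((((n-(m+1) : ℕ):ℝ)) * (1-p)^(n-(m+1)-1) * (-1)))) p := by
      have := (h1.fun_mul h2).const_mul ((n.choose (m+1) : ℝ))
      have hf : (fun p : ℝ => (n.choose (m+1) : ℝ) * p^(m+1) * (1-p)^(n-(m+1)))
          = fun p : ℝ => (n.choose (m+1) : ℝ) * (p^(m+1) * (1-p)^(n-(m+1))) := by
        funext p; ring
      rw [hf]; exact this
    have hsum := (ih (by omega)).fun_add hterm
    refine hsum.congr_deriv (Eq.symm ?_)
    -- arithmetic identity
    have hc1 : (n:ℝ) * (((n-1).choose m : ℕ) : ℝ) = (n.choose (m+1) : ℝ) * ((m:ℝ)+1) := by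
      have := Nat.add_one_mul_choose_eq (n-1) m
      have hn1 : n - 1 + 1 = n := by omega
      rw [hn1] at this
      exact_mod_cast this
    have hc2 : (n:ℝ) * (((n-1).choose (m+1) : ℕ) : ℝ)
        = (n.choose (m+1) : ℝ) * ((n:ℝ) - (m:ℝ) - 1) := by
      have t1 := Nat.add_one_mul_choose_eq (n-1) (m+1)
      have hn1 : n - 1 + 1 = n := by omega
      rw [hn1] at t1
      have t2 := Nat.choose_succ_right_eq n (m+1)
      rw [t2] at t1
      have hcast : ((n - (m+1) : ℕ) : ℝ) = (n:ℝ) - (m:ℝ) - 1 := by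
        have : m + 1 ≤ n := by omega
        push_cast [this]; ring
      calc (n:ℝ) * (((n-1).choose (m+1) : ℕ) : ℝ)
          = ((n.choose (m+1) * (n - (m+1)) : ℕ) : ℝ) := by exact_mod_cast congrArg (Nat.cast (R := ℝ)) t1
        _ = (n.choose (m+1) : ℝ) * ((n:ℝ) - (m:ℝ) - 1) := by push_cast [hcast]; ring
    have hcast2 : ((n - (m+1) : ℕ) : ℝ) = (n:ℝ) - (m:ℝ) - 1 := by
      have : m + 1 ≤ n := by omega
      push_cast [this]; ring
    have e1 : n - 1 - (m+1) = n - m - 2 := by omega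
    have e2 : n - (m+1) - 1 = n - m - 2 := by omega
    have e3 : n - (m+1) = (n - m - 2) + 1 := by omega
    have e4 : n - 1 - m = (n - m - 2) + 1 := by omega
    rw [hcast2, e1, e2, e3, e4, pow_succ, pow_succ]
    push_cast
    linear_combination (p^m * (1-p)^(n-m-2) * (1-p)) * hc1 - (p^(m+1) * (1-p)^(n-m-2)) * hc2

/-- For `n ≥ 2` and `0 ≤ m ≤ n-2`, one has `q m ≥ q (m+1)` iff
`∫_0^1 (1 - v/(m+1))^m (1 + v/(n-m-1))^{n-m-1} dv ≥ 1`. -/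
theorem qm_ge_qm1_iff_integral_v (n : ℕ) (hn : 2 ≤ n) (q : ℕ → ℝ)
    (hq : ∀ m, q m =
      ∑ k ∈ Finset.range (m + 1),
        (n.choose k : ℝ) * ((m : ℝ) / n) ^ k * (1 - (m : ℝ) / n) ^ (n - k)) :
    ∀ m ≤ n - 2,
      (q m ≥ q (m + 1) ↔
        (∫ v in (0:ℝ)..1,
            (1 - v / ((m : ℝ) + 1)) ^ m *
              (1 + v / ((n : ℝ) - m - 1)) ^ (n - m - 1)) ≥ 1) := by
  intro m hm
  have hm2 : m + 2 ≤ n := by omega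
  have hN0 : (n:ℝ) ≠ 0 := by positivity
  have hNm : (m:ℝ) + 2 ≤ (n:ℝ) := by exact_mod_cast hm2
  have hu0 : ((m:ℝ) + 1) ≠ 0 := by positivity
  have hr1 : (1:ℝ) ≤ (n:ℝ) - m - 1 := by linarith
  have hr0 : ((n:ℝ) - m - 1) ≠ 0 := by linarith
  set N : ℝ := (n:ℝ)
  set u : ℝ := (m:ℝ) + 1 with hudef
  set r : ℝ := N - m - 1 with hrdef
  set a : ℝ := (m:ℝ)/N with hadef
  set b : ℝ := u/N with hbdef
  set e : ℕ := n - m - 1 with hedef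
  set I : ℝ := ∫ p in a..b, p^m * (1-p)^e with hIdef
  set C : ℝ := (((n-1).choose m : ℕ) : ℝ) with hCdef
  set B : ℝ := ((n.choose (m+1) : ℕ) : ℝ) with hBdef
  set K : ℝ := (N/u)^m * (N/r)^e with hKdef
  set T : ℝ := B * b^(m+1) * (1-b)^e with hTdef
  -- FTC
  have he1 : n - 1 - m = e := by omega
  have hderiv : ∀ p ∈ Set.uIcc a b, HasDerivAt
      (fun p : ℝ => ∑ k ∈ Finset.range (m+1), (n.choose k : ℝ) * p^k * (1-p)^(n-k))
      (-(N * C) * (p^m * (1-p)^e)) p := by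
    intro p _
    have := binCDF_hasDerivAt n p m (by omega)
    rwa [he1] at this
  have hcont : IntervalIntegrable (fun p : ℝ => -(N * C) * (p^m * (1-p)^e)) MeasureTheory.volume a b := by
    apply Continuous.intervalIntegrable
    fun_prop
  have hFTC := intervalIntegral.integral_eq_sub_of_hasDerivAt hderiv hcont
  have hSconst : (∫ p in a..b, -(N * C) * (p^m * (1-p)^e)) = -(N*C) * I := by
    rw [hIdef, intervalIntegral.integral_const_mul]
  -- q values
  have hqm : q m = ∑ k ∈ Finset.range (m+1), (n.choose k : ℝ) * a^k * (1-a)^(n-k) := hq m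
  have hqm1 : q (m+1) = (∑ k ∈ Finset.range (m+1), (n.choose k : ℝ) * b^k * (1-b)^(n-k))
      + T := by
    rw [hTdef]
    rw [hq (m+1), Finset.sum_range_succ]
    have hb' : (((m+1 : ℕ)):ℝ)/N = b := by push_cast [hbdef, hudef]; ring
    have he2 : n - (m+1) = e := by omega
    rw [he2]
    push_cast
    rfl
  have hkey : q m - q (m+1) = N * C * I - T := by
    rw [hqm, hqm1]
    have := hFTC
    rw [hSconst] at this
    linarith [this]
  -- substitution for the integral
  set c : ℝ := -(1/N) with hcdef
  have hc0 : c ≠ 0 := by simp [hcdef, hN0]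
  set h : ℝ → ℝ := fun p => p^m * (1-p)^e with hhdef
  have hsub := intervalIntegral.integral_comp_mul_add (a := 0) (b := 1) h hc0 b
  have hend1 : c * 0 + b = b := by ring
  have hend2 : c * 1 + b = a := by rw [hcdef, hbdef, hadef, hudef]; field_simp; ring
  rw [hend1, hend2] at hsub
  have hpt : ∀ v : ℝ, (1 - v/u)^m * (1 + v/r)^e = K * h (c*v + b) := by
    intro v
    have hcb : c*v + b = (u - v)/N := by rw [hcdef, hbdef]; field_simp; ring
    have hcb2 : (1:ℝ) - (u - v)/N = (r + v)/N := by rw [hrdef, hudef]; field_simp; ring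
    simp only [hhdef, hcb, hcb2, hKdef]
    have q1 : (1 - v/u)^m = (N/u)^m * ((u-v)/N)^m := by
      have hb2 : (1 : ℝ) - v/u = (N/u) * ((u-v)/N) := by field_simp
      rw [hb2, mul_pow]
    have q2 : (1 + v/r)^e = (N/r)^e * ((r+v)/N)^e := by
      have hb3 : (1 : ℝ) + v/r = (N/r) * ((r+v)/N) := by field_simp
      rw [hb3, mul_pow]
    rw [q1, q2]; ring
  have hJ : (∫ v in (0:ℝ)..1, (1 - v/u)^m * (1 + v/r)^e) = N * K * I := by
    have : (∫ v in (0:ℝ)..1, (1 - v/u)^m * (1 + v/r)^e)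
        = ∫ v in (0:ℝ)..1, K * h (c*v + b) := by
      apply intervalIntegral.integral_congr
      intro v _
      exact hpt v
    rw [this, intervalIntegral.integral_const_mul, hsub]
    rw [hIdef]
    have : (∫ x in b..a, h x) = - ∫ x in a..b, h x := by
      rw [intervalIntegral.integral_symm]
    rw [this]
    rw [hcdef]
    have hswap : (∫ x in a..b, h x) = I := by rw [hIdef, hhdef]
    rw [hhdef]
    field_simp
    ring
  -- threshold identity : K * (B * b^(m+1) * (1-b)^e) = C
  have h1b : 1 - b = r/N := by rw [hbdef, hrdef, hudef]; field_simp; ring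
  have hBu : B * u = N * C := by
    have := Nat.add_one_mul_choose_eq (n-1) m
    have hn1 : n - 1 + 1 = n := by omega
    rw [hn1] at this
    have h' : (n : ℝ) * (((n-1).choose m : ℕ) : ℝ) = ((n.choose (m+1) : ℕ) : ℝ) * ((m:ℝ)+1) := by
      exact_mod_cast this
    rw [hBdef, hCdef, hudef]
    linarith [h']
  have hKT : K * T = C := by
    rw [hTdef, h1b, hKdef, hbdef, pow_succ]
    have q3 : (N/u)^m * (u/N)^m = 1 := by
      rw [← mul_pow]
      have : N/u * (u/N) = 1 := by field_simp
      rw [this, one_pow]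
    have q4 : (N/r)^e * (r/N)^e = 1 := by
      rw [← mul_pow]
      have : N/r * (r/N) = 1 := by field_simp
      rw [this, one_pow]
    calc (N/u)^m * (N/r)^e * (B * ((u/N)^m * (u/N)) * (r/N)^e)
        = B * (u/N) * (((N/u)^m * (u/N)^m) * ((N/r)^e * (r/N)^e)) := by ring
      _ = B * (u/N) := by rw [q3, q4]; ring
      _ = C := by
          rw [← mul_div_assoc, hBu, mul_comm N C, mul_div_assoc, div_self hN0, mul_one]
  -- conclude
  have hfinal : (∫ v in (0:ℝ)..1, (1 - v/u)^m * (1 + v/r)^e) - 1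
      = (K / C) * (q m - q (m+1)) := by
    have hC0' : C ≠ 0 := by
      have : 0 < ((n-1).choose m) := Nat.choose_pos (by omega)
      rw [hCdef]
      exact_mod_cast this.ne'
    rw [hJ, hkey, mul_sub]
    have e1 : K / C * (N * C * I) = N * K * I := by
      field_simp
    have e2 : K / C * T = 1 := by
      rw [div_mul_eq_mul_div, hKT, div_self hC0']
    rw [e1, e2]
  have hC0 : 0 < C := by
    rw [hCdef]
    have : 0 < (n-1).choose m := Nat.choose_pos (by omega)
    exact_mod_cast this
  have hK0 : 0 < K := by
    rw [hKdef]
    have hNpos : 0 < N := by positivity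
    have hupos : 0 < u := by positivity
    have hrpos : 0 < r := by linarith
    positivity
  have hKC : 0 < K / C := div_pos hK0 hC0
  constructor
  · intro hge
    rw [ge_iff_le, ← sub_nonneg, hfinal]
    exact mul_nonneg hKC.le (by linarith)
  · intro hge
    rw [ge_iff_le, ← sub_nonneg, hfinal] at hge
    rw [ge_iff_le, ← sub_nonneg]
    exact (mul_nonneg_iff_of_pos_left hKC).mp hge
end

section
/- Let n ≥ 3 be an integer and let v ∈ (0, 1] be a real number. Then the function g_v defined on the real interval [1, n−2] by g_v(x) = (1 − v/(x+1))^{x} (1 + v/(n−x−1))^{n−x−1} is strictly decreasing; in particular its derivative satisfies g_v′(x) < 0 for every x ∈ [1, n−2]. -/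
open Real in
/-- For `n ≥ 3` and `v ∈ (0,1]`, the function
`g_v(x) = (1 - v/(x+1))^x (1 + v/(n-x-1))^{n-x-1}` (real powers)
is strictly decreasing on `[1, n-2]`, and its derivative is negative there. -/
theorem gv_strictAntiOn (n : ℕ) (hn : 3 ≤ n) (v : ℝ) (hv : v ∈ Set.Ioc (0:ℝ) 1)
    (g : ℝ → ℝ)
    (hg : ∀ x, g x = (1 - v / (x + 1)) ^ x * (1 + v / ((n : ℝ) - x - 1)) ^ ((n : ℝ) - x - 1)) :
    StrictAntiOn g (Set.Icc (1:ℝ) ((n : ℝ) - 2)) ∧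
      ∀ x ∈ Set.Icc (1:ℝ) ((n : ℝ) - 2), deriv g x < 0 := by
  obtain ⟨hv0, hv1⟩ := hv
  have hn3 : (3:ℝ) ≤ (n:ℝ) := by exact_mod_cast hn
  set U : Set ℝ := Set.Ioo (1/2 : ℝ) ((n:ℝ) - 3/2) with hUdef
  have hUopen : IsOpen U := isOpen_Ioo
  set F : ℝ → ℝ := fun t =>
    Real.log (1 - v / (t + 1)) * t +
    Real.log (1 + v / ((n:ℝ) - t - 1)) * ((n:ℝ) - t - 1) with hF
  set D : ℝ → ℝ := fun x =>
    (Real.log (1 - v / (x + 1)) + x * v / ((x + 1) * (x + 1 - v))) +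
    (v / (((n:ℝ) - x - 1) + v) - Real.log (1 + v / ((n:ℝ) - x - 1))) with hD
  -- basic positivity facts on U
  have hAB : ∀ x ∈ U, 0 < 1 - v / (x + 1) ∧ 0 < 1 + v / ((n:ℝ) - x - 1) := by
    intro x hx
    obtain ⟨hx1, hx2⟩ := hx
    have ha : (3/2 : ℝ) < x + 1 := by linarith
    have hy : (1/2 : ℝ) < (n:ℝ) - x - 1 := by linarith
    constructor
    · have : v / (x + 1) < 1 := by
        rw [div_lt_one (by linarith)]; linarith
      linarith
    · have : 0 < v / ((n:ℝ) - x - 1) := div_pos hv0 (by linarith)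
      linarith
  -- g agrees with exp ∘ F on U
  have hgF : ∀ x ∈ U, g x = Real.exp (F x) := by
    intro x hx
    obtain ⟨hA, hB⟩ := hAB x hx
    rw [hg x, Real.rpow_def_of_pos hA, Real.rpow_def_of_pos hB, ← Real.exp_add]
  -- derivative of g on U
  have hder : ∀ x ∈ U, HasDerivAt g (Real.exp (F x) * D x) x := by
    intro x hx
    obtain ⟨hA, hB⟩ := hAB x hx
    obtain ⟨hx1, hx2⟩ := hx
    have ha : (3/2 : ℝ) < x + 1 := by linarith
    have hy : (1/2 : ℝ) < (n:ℝ) - x - 1 := by linarith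
    have ha0 : x + 1 ≠ 0 := by linarith
    have hy0 : (n:ℝ) - x - 1 ≠ 0 := by linarith
    have hav : x + 1 - v ≠ 0 := by linarith
    have hyv : ((n:ℝ) - x - 1) + v ≠ 0 := by positivity
    -- derivative of A
    have h1 : HasDerivAt (fun t : ℝ => 1 - v / (t + 1)) (v / (x + 1) ^ 2) x := by
      have hd : HasDerivAt (fun t : ℝ => t + 1) 1 x := (hasDerivAt_id x).add_const 1
      have := ((hasDerivAt_const x v).div hd ha0)
      have h := (hasDerivAt_const x (1:ℝ)).sub this
      refine h.congr_deriv ?_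
      field_simp
      ring
    -- derivative of B
    have h2 : HasDerivAt (fun t : ℝ => 1 + v / ((n:ℝ) - t - 1)) (v / ((n:ℝ) - x - 1) ^ 2) x := by
      have hd : HasDerivAt (fun t : ℝ => (n:ℝ) - t - 1) (-1) x := by
        have := ((hasDerivAt_id x).const_sub (n:ℝ)).sub_const 1
        exact this
      have := ((hasDerivAt_const x v).div hd hy0)
      have h := (hasDerivAt_const x (1:ℝ)).add this
      refine h.congr_deriv ?_
      field_simp
      ring
    have hlogA := (h1.log hA.ne').mul (hasDerivAt_id x)
    have hlogB := (h2.log hB.ne').mul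
      (((hasDerivAt_id x).const_sub (n:ℝ)).sub_const 1)
    have hFd : HasDerivAt F (D x) x := by
      have h := hlogA.add hlogB
      refine h.congr_deriv ?_
      rw [hD]
      have e1 : (x + 1) ^ 2 * (1 - v / (x + 1)) = (x + 1) * (x + 1 - v) := by
        field_simp
      have e2 : ((n:ℝ) - x - 1) * (1 + v / ((n:ℝ) - x - 1)) = ((n:ℝ) - x - 1) + v := by
        field_simp
      have hA0 : (1 - v / (x + 1)) ≠ 0 := hA.ne'
      have hB0 : (1 + v / ((n:ℝ) - x - 1)) ≠ 0 := hB.ne'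
      simp only [id_eq]
      field_simp
      ring
    have heq : g =ᶠ[nhds x] fun t => Real.exp (F t) := by
      filter_upwards [hUopen.mem_nhds ⟨hx1, hx2⟩] with t ht
      exact hgF t ht
    exact (hFd.exp).congr_of_eventuallyEq heq
  -- negativity of D on Icc 1 (n-2)
  have hIccU : Set.Icc (1:ℝ) ((n:ℝ) - 2) ⊆ U := by
    intro x ⟨hx1, hx2⟩
    exact ⟨by linarith, by linarith⟩
  have hDneg : ∀ x ∈ Set.Icc (1:ℝ) ((n:ℝ) - 2), D x < 0 := by
    intro x ⟨hx1, hx2⟩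
    obtain ⟨hA, hB⟩ := hAB x (hIccU ⟨hx1, hx2⟩)
    have ha : (2:ℝ) ≤ x + 1 := by linarith
    have hy : (1:ℝ) ≤ (n:ℝ) - x - 1 := by linarith
    have hav : (0:ℝ) < x + 1 - v := by linarith
    -- first bracket ≤ 0
    have hlogA : Real.log (1 - v / (x + 1)) ≤ -(v / (x + 1)) := by
      have := Real.log_le_sub_one_of_pos hA
      linarith
    have hfrac : x * v / ((x + 1) * (x + 1 - v)) ≤ v / (x + 1) := by
      rw [div_le_div_iff₀ (by positivity) (by linarith)]
      nlinarith [mul_nonneg (mul_nonneg hv0.le (show (0:ℝ) ≤ x + 1 by linarith))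
        (show (0:ℝ) ≤ 1 - v by linarith)]
    -- second bracket < 0
    have hB1 : 1 < 1 + v / ((n:ℝ) - x - 1) := by
      have : 0 < v / ((n:ℝ) - x - 1) := div_pos hv0 (by linarith)
      linarith
    have hlogB : v / (((n:ℝ) - x - 1) + v) < Real.log (1 + v / ((n:ℝ) - x - 1)) := by
      have hBinv : (1 + v / ((n:ℝ) - x - 1))⁻¹ ≠ 1 := by
        exact ne_of_lt (inv_lt_one_of_one_lt₀ hB1)
      have h := Real.log_lt_sub_one_of_pos (inv_pos.2 hB) hBinv
      rw [Real.log_inv] at h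
      have e : (1 + v / ((n:ℝ) - x - 1))⁻¹ = ((n:ℝ) - x - 1) / (((n:ℝ) - x - 1) + v) := by
        rw [inv_eq_one_div]
        rw [div_eq_div_iff hB.ne' (by positivity)]
        field_simp
      rw [e] at h
      have e2 : ((n:ℝ) - x - 1) / (((n:ℝ) - x - 1) + v) - 1 = -(v / (((n:ℝ) - x - 1) + v)) := by
        field_simp
        ring
      rw [e2] at h
      linarith
    rw [hD]
    linarith
  have hcont : ContinuousOn g (Set.Icc (1:ℝ) ((n:ℝ) - 2)) := fun x hx =>
    ((hder x (hIccU hx)).continuousAt).continuousWithinAt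
  constructor
  · apply strictAntiOn_of_deriv_neg (convex_Icc _ _) hcont
    intro x hx
    rw [interior_Icc] at hx
    have hxIcc : x ∈ Set.Icc (1:ℝ) ((n:ℝ) - 2) := ⟨le_of_lt hx.1, le_of_lt hx.2⟩
    rw [(hder x (hIccU hxIcc)).deriv]
    exact mul_neg_of_pos_of_neg (Real.exp_pos _) (hDneg x hxIcc)
  · intro x hx
    rw [(hder x (hIccU hx)).deriv]
    exact mul_neg_of_pos_of_neg (Real.exp_pos _) (hDneg x hx)
end

section
/- Let n ≥ 3 be an integer. Then the function h defined on the real interval [1, n−2] by h(x) = ∫_{0}^{1} (1 − v/(x+1))^{x} (1 + v/(n−x−1))^{n−x−1} dv is decreasing on [1, n−2]. -/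
open Real Set

private lemma L_antitone (n : ℕ) (hn : 3 ≤ n) (v : ℝ) (hv0 : 0 ≤ v) (hv1 : v ≤ 1) :
    AntitoneOn (fun x : ℝ => x * Real.log (1 - v / (x + 1))
      + ((n : ℝ) - x - 1) * Real.log (1 + v / ((n : ℝ) - x - 1)))
      (Set.Icc 1 ((n : ℝ) - 2)) := by
  have hn' : (3 : ℝ) ≤ (n : ℝ) := by exact_mod_cast hn
  -- pointwise positivity facts on the interval
  have hpos : ∀ x ∈ Set.Icc (1:ℝ) ((n:ℝ) - 2),
      0 < 1 - v / (x + 1) ∧ 0 < (n:ℝ) - x - 1 ∧ 0 < 1 + v / ((n:ℝ) - x - 1) := by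
    intro x hx
    obtain ⟨hx1, hx2⟩ := hx
    have ht : (0:ℝ) < x + 1 := by linarith
    have h1 : v / (x + 1) < 1 := (div_lt_one ht).2 (by linarith)
    have hs : (0:ℝ) < (n:ℝ) - x - 1 := by linarith
    exact ⟨by linarith, hs, by positivity⟩
  apply antitoneOn_of_hasDerivWithinAt_nonpos (f' := fun x =>
      (1 * Real.log (1 - v / (x + 1)) + x * ((v / (x + 1) ^ 2) / (1 - v / (x + 1))))
      + ((-1) * Real.log (1 + v / ((n:ℝ) - x - 1))
        + ((n:ℝ) - x - 1) * ((v / ((n:ℝ) - x - 1) ^ 2) / (1 + v / ((n:ℝ) - x - 1)))))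
    (convex_Icc _ _)
  · -- continuity
    have hc1 : ContinuousOn (fun x : ℝ => 1 - v / (x + 1)) (Set.Icc 1 ((n:ℝ) - 2)) := by
      apply continuousOn_const.sub
      exact continuousOn_const.div (by fun_prop) (fun x hx => by
        have := hx.1; intro h; linarith [h])
    have hc2 : ContinuousOn (fun x : ℝ => 1 + v / ((n:ℝ) - x - 1)) (Set.Icc 1 ((n:ℝ) - 2)) := by
      apply continuousOn_const.add
      exact continuousOn_const.div (by fun_prop) (fun x hx => (hpos x hx).2.1.ne')
    apply ContinuousOn.add
    · exact continuousOn_id.mul (hc1.log (fun x hx => (hpos x hx).1.ne'))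
    · exact (by fun_prop : ContinuousOn (fun x : ℝ => (n:ℝ) - x - 1) _).mul
        (hc2.log (fun x hx => (hpos x hx).2.2.ne'))
  · -- derivative
    intro x hx
    rw [interior_Icc] at hx
    have hxI : x ∈ Set.Icc (1:ℝ) ((n:ℝ) - 2) := ⟨hx.1.le, hx.2.le⟩
    obtain ⟨hb1, hs, hb2⟩ := hpos x hxI
    have ht : (0:ℝ) < x + 1 := by linarith [hx.1]
    -- first factor
    have d1 : HasDerivAt (fun x : ℝ => v / (x + 1)) (-(v / (x + 1) ^ 2)) x := by
      have := (hasDerivAt_const x v).div ((hasDerivAt_id x).add_const 1) ht.ne'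
      refine this.congr_deriv ?_
      simp only [id]; ring
    have dbase1 : HasDerivAt (fun x : ℝ => 1 - v / (x + 1)) (v / (x + 1) ^ 2) x := by
      exact ((hasDerivAt_const x (1:ℝ)).sub d1).congr_deriv (by ring)
    have dlog1 := dbase1.log hb1.ne'
    have dA : HasDerivAt (fun x : ℝ => x * Real.log (1 - v / (x + 1)))
        (1 * Real.log (1 - v / (x + 1)) + x * ((v / (x + 1) ^ 2) / (1 - v / (x + 1)))) x :=
      (hasDerivAt_id x).mul dlog1
    -- second factor
    have dsx : HasDerivAt (fun x : ℝ => (n:ℝ) - x - 1) (-1) x := by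
      simpa using ((hasDerivAt_const x ((n:ℝ))).sub (hasDerivAt_id x)).sub_const 1
    have d2 : HasDerivAt (fun x : ℝ => v / ((n:ℝ) - x - 1)) (v / ((n:ℝ) - x - 1) ^ 2) x := by
      have := (hasDerivAt_const x v).div dsx hs.ne'
      refine this.congr_deriv ?_
      ring
    have dbase2 : HasDerivAt (fun x : ℝ => 1 + v / ((n:ℝ) - x - 1))
        (v / ((n:ℝ) - x - 1) ^ 2) x := by
      exact ((hasDerivAt_const x (1:ℝ)).add d2).congr_deriv (by ring)
    have dlog2 := dbase2.log hb2.ne'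
    have dB : HasDerivAt (fun x : ℝ => ((n:ℝ) - x - 1) * Real.log (1 + v / ((n:ℝ) - x - 1)))
        ((-1) * Real.log (1 + v / ((n:ℝ) - x - 1))
          + ((n:ℝ) - x - 1) * ((v / ((n:ℝ) - x - 1) ^ 2) / (1 + v / ((n:ℝ) - x - 1)))) x :=
      dsx.mul dlog2
    exact (dA.add dB).hasDerivWithinAt
  · -- derivative nonpositive
    intro x hx
    rw [interior_Icc] at hx
    have hxI : x ∈ Set.Icc (1:ℝ) ((n:ℝ) - 2) := ⟨hx.1.le, hx.2.le⟩
    obtain ⟨hb1, hs, hb2⟩ := hpos x hxI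
    have ht : (0:ℝ) < x + 1 := by linarith [hx.1]
    set t : ℝ := x + 1 with htdef
    set s : ℝ := (n:ℝ) - x - 1 with hsdef
    have htv : 0 < t - v := by
      have h1 : v / t < 1 := by linarith [hb1]
      have := (div_lt_one ht).1 h1
      linarith
    -- part 1 : log (1 - v/t) + x * ((v/t^2)/(1-v/t)) ≤ 0
    have e1 : (v / t ^ 2) / (1 - v / t) = v / (t * (t - v)) := by
      rw [div_div]
      congr 1
      field_simp
    have p1 : x * ((v / t ^ 2) / (1 - v / t)) ≤ v / t := by
      rw [e1]
      have h1 : x * (v / (t * (t - v))) ≤ (t - v) * (v / (t * (t - v))) := by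
        apply mul_le_mul_of_nonneg_right _ (by positivity)
        simp only [htdef]; linarith
      have h2 : (t - v) * (v / (t * (t - v))) = v / t := by
        field_simp
      linarith
    have l1 : Real.log (1 - v / t) ≤ -(v / t) := by
      have := Real.log_le_sub_one_of_pos hb1
      linarith
    -- part 2 : -log(1 + v/s) + s * ((v/s^2)/(1+v/s)) ≤ 0
    have e2 : s * ((v / s ^ 2) / (1 + v / s)) = v / (s + v) := by
      have hsv : (0:ℝ) < s + v := by linarith
      field_simp
    have l2 : v / (s + v) ≤ Real.log (1 + v / s) := by
      have hsv : (0:ℝ) < s + v := by linarith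
      have hq : (0:ℝ) < s / (s + v) := by positivity
      have h3 := Real.log_le_sub_one_of_pos hq
      have h4 : Real.log (1 + v / s) = -Real.log (s / (s + v)) := by
        rw [← Real.log_inv]
        congr 1
        field_simp
      have h5 : s / (s + v) - 1 = -(v / (s + v)) := by
        field_simp
        ring
      rw [h4]
      linarith
    rw [e2] at *
    simp only [one_mul, neg_one_mul]
    linarith

private lemma key_antitone (n : ℕ) (hn : 3 ≤ n) (v : ℝ) (hv0 : 0 ≤ v) (hv1 : v ≤ 1) :
    AntitoneOn (fun x : ℝ => (1 - v / (x + 1)) ^ x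
      * (1 + v / ((n : ℝ) - x - 1)) ^ ((n : ℝ) - x - 1)) (Set.Icc 1 ((n : ℝ) - 2)) := by
  have hpos : ∀ x ∈ Set.Icc (1:ℝ) ((n:ℝ) - 2),
      0 < 1 - v / (x + 1) ∧ 0 < 1 + v / ((n:ℝ) - x - 1) := by
    intro x hx
    obtain ⟨hx1, hx2⟩ := hx
    have ht : (0:ℝ) < x + 1 := by linarith
    have h1 : v / (x + 1) < 1 := (div_lt_one ht).2 (by linarith)
    have hs : (0:ℝ) < (n:ℝ) - x - 1 := by linarith
    exact ⟨by linarith, by positivity⟩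
  have hrw : ∀ x ∈ Set.Icc (1:ℝ) ((n:ℝ) - 2),
      (1 - v / (x + 1)) ^ x * (1 + v / ((n : ℝ) - x - 1)) ^ ((n : ℝ) - x - 1)
      = Real.exp (x * Real.log (1 - v / (x + 1))
        + ((n : ℝ) - x - 1) * Real.log (1 + v / ((n : ℝ) - x - 1))) := by
    intro x hx
    obtain ⟨h1, h2⟩ := hpos x hx
    rw [Real.rpow_def_of_pos h1, Real.rpow_def_of_pos h2, ← Real.exp_add]
    congr 1
    ring
  intro a ha b hb hab
  simp only
  rw [hrw a ha, hrw b hb]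
  exact Real.exp_le_exp.2 (L_antitone n hn v hv0 hv1 ha hb hab)

open Real in
/-- For `n ≥ 3`, the function
`h(x) = ∫_0^1 (1 - v/(x+1))^x (1 + v/(n-x-1))^{n-x-1} dv` (real powers)
is decreasing on `[1, n-2]`. -/
theorem h_antitoneOn (n : ℕ) (hn : 3 ≤ n) (h : ℝ → ℝ)
    (hh : ∀ x, h x = ∫ v in (0:ℝ)..1,
      (1 - v / (x + 1)) ^ x * (1 + v / ((n : ℝ) - x - 1)) ^ ((n : ℝ) - x - 1)) :
    AntitoneOn h (Set.Icc (1:ℝ) ((n : ℝ) - 2)) := by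
  have hint : ∀ x ∈ Set.Icc (1:ℝ) ((n:ℝ) - 2), IntervalIntegrable
      (fun v : ℝ => (1 - v / (x + 1)) ^ x * (1 + v / ((n : ℝ) - x - 1)) ^ ((n : ℝ) - x - 1))
      MeasureTheory.volume 0 1 := by
    intro x hx
    obtain ⟨hx1, hx2⟩ := hx
    have ht : (0:ℝ) < x + 1 := by linarith
    have hs : (0:ℝ) < (n:ℝ) - x - 1 := by linarith
    apply ContinuousOn.intervalIntegrable
    apply ContinuousOn.mul
    · apply ContinuousOn.rpow_const
      · exact continuousOn_const.sub (continuousOn_id.div continuousOn_const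
          (fun v _ => ht.ne'))
      · exact fun v _ => Or.inr (by linarith)
    · apply ContinuousOn.rpow_const
      · exact continuousOn_const.add (continuousOn_id.div continuousOn_const
          (fun v _ => hs.ne'))
      · exact fun v _ => Or.inr (by linarith)
  intro a ha b hb hab
  rw [hh a, hh b]
  apply intervalIntegral.integral_mono_on (by norm_num) (hint b hb) (hint a ha)
  intro v hv
  exact key_antitone n hn v hv.1 hv.2 ha hb hab
end

section
/- For every integer s ≥ 1, ∫_{0}^{1} (1 − v/(2s))^{2s−1} (1 + v/s)^{s} dv ≥ 1 + 5/(96 s²) − 1/(80 s³) + 1/(96 s⁴); in particular this integral is strictly greater than 1. -/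
set_option maxHeartbeats 1000000

lemma binom_lower (n : ℕ) (u : ℝ) (hu0 : 0 ≤ u) (hu1 : u ≤ 1) :
    1 - (n:ℝ)*u + (n:ℝ)*((n:ℝ)-1)/2*u^2 - (n:ℝ)*((n:ℝ)-1)*((n:ℝ)-2)/6*u^3 ≤ (1-u)^n := by
  induction n with
  | zero => norm_num
  | succ n ih =>
    have h1u : (0:ℝ) ≤ 1 - u := by linarith
    have h3 : (0:ℝ) ≤ (n:ℝ)*((n:ℝ)-1)*((n:ℝ)-2) := by
      rcases n with _ | _ | n
      · norm_num
      · norm_num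
      · have h := Nat.cast_nonneg (α:=ℝ) n
        push_cast
        nlinarith [mul_nonneg (mul_nonneg (show (0:ℝ) ≤ (n:ℝ)+2 by linarith)
          (show (0:ℝ) ≤ (n:ℝ)+1 by linarith)) h]
    have key : (1-u) * (1 - (n:ℝ)*u + (n:ℝ)*((n:ℝ)-1)/2*u^2 - (n:ℝ)*((n:ℝ)-1)*((n:ℝ)-2)/6*u^3)
        = (1 - ((n:ℝ)+1)*u + ((n:ℝ)+1)*(((n:ℝ)+1)-1)/2*u^2
            - ((n:ℝ)+1)*(((n:ℝ)+1)-1)*(((n:ℝ)+1)-2)/6*u^3)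
          + (n:ℝ)*((n:ℝ)-1)*((n:ℝ)-2)/6*u^4 := by ring
    have h4 : (0:ℝ) ≤ (n:ℝ)*((n:ℝ)-1)*((n:ℝ)-2)/6*u^4 :=
      mul_nonneg (by linarith) (by positivity)
    push_cast
    calc 1 - ((n:ℝ)+1)*u + ((n:ℝ)+1)*(((n:ℝ)+1)-1)/2*u^2
          - ((n:ℝ)+1)*(((n:ℝ)+1)-1)*(((n:ℝ)+1)-2)/6*u^3
        ≤ (1-u) * (1 - (n:ℝ)*u + (n:ℝ)*((n:ℝ)-1)/2*u^2 - (n:ℝ)*((n:ℝ)-1)*((n:ℝ)-2)/6*u^3) := by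
          push_cast
          push_cast at key
          linarith [key, h4]
      _ ≤ (1-u) * (1-u)^n := by
          exact mul_le_mul_of_nonneg_left ih h1u
      _ = (1-u)^(n+1) := by ring

lemma L2_nonneg (σ x : ℝ) (hcase : σ = 1 ∨ 2 ≤ σ) (hσ : 1 ≤ σ)
    (hx0 : 0 ≤ x) (hsx : σ*x ≤ 1/2) :
    (0:ℝ) ≤ 1 - 3*σ*x^2 + 2*σ*x^3 + 9*(σ*(σ-1)/2)*x^4
      - 12*(σ*(σ-1)/2)*x^5 - 27*(σ*(σ-1)*(σ-2)/6)*x^6 := by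
  rcases hcase with h1 | h2
  · subst h1
    have hx : x ≤ 1/2 := by linarith
    nlinarith [pow_nonneg hx0 3, sq_nonneg x]
  · have hx : x ≤ 1/4 := by nlinarith
    have hp0 : 0 ≤ σ*x := by positivity
    have hq0 : 0 ≤ (σ-1)*x := mul_nonneg (by linarith) hx0
    have hr0 : 0 ≤ (σ-2)*x := mul_nonneg (by linarith) hx0
    have hq : (σ-1)*x ≤ 1/2 := by nlinarith
    have hr : (σ-2)*x ≤ 1/2 := by nlinarith
    have hx3 : (0:ℝ) ≤ x^3 := by positivity
    have e0 : σ*x^2 ≤ (1/2)*x := by nlinarith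
    have e1 : (σ*x)*((σ-1)*x) ≤ 1/4 := by nlinarith
    have e1' : σ*(σ-1)*x^5 ≤ (1/4)*x^3 := by nlinarith [mul_le_mul_of_nonneg_right e1 hx3]
    have e2 : ((σ*x)*((σ-1)*x))*((σ-2)*x) ≤ 1/8 := by nlinarith [mul_nonneg hp0 hq0]
    have e2' : σ*(σ-1)*(σ-2)*x^6 ≤ (1/8)*x^3 := by nlinarith [mul_le_mul_of_nonneg_right e2 hx3]
    have e3 : x^3 ≤ (1/16)*x := by nlinarith
    have e4 : (0:ℝ) ≤ σ*x^3 := by positivity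
    have e5 : (0:ℝ) ≤ σ*(σ-1)*x^4 := by
      have : (0:ℝ) ≤ ((σ*x)*((σ-1)*x))*x^2 := mul_nonneg (mul_nonneg hp0 hq0) (by positivity)
      nlinarith [this]
    nlinarith [e0, e1', e2', e3, e4, e5]

lemma ptwise (s : ℕ) (hs : 1 ≤ s) (x : ℝ) (hx0 : 0 ≤ x) (hsx : (s:ℝ)*x ≤ 1/2) :
    (1 - 3*(s:ℝ)*x^2 + 2*(s:ℝ)*x^3 + 9*((s:ℝ)*((s:ℝ)-1)/2)*x^4
        - 12*((s:ℝ)*((s:ℝ)-1)/2)*x^5 - 27*((s:ℝ)*((s:ℝ)-1)*((s:ℝ)-2)/6)*x^6)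
        * (1+x+x^2+x^3)
      ≤ (1-x)^(2*s-1) * (1+2*x)^s := by
  have hσ : (1:ℝ) ≤ (s:ℝ) := by exact_mod_cast hs
  have hx : x ≤ 1/2 := by nlinarith
  have hu0 : (0:ℝ) ≤ 3*x^2 - 2*x^3 := by nlinarith
  have hu1 : 3*x^2 - 2*x^3 ≤ 1 := by nlinarith
  have hbin := binom_lower s (3*x^2 - 2*x^3) hu0 hu1
  have hx1 : (0:ℝ) < 1 - x := by linarith
  have hpow : (1-x)^(2*s-1) * (1+2*x)^s * (1-x) = (1 - (3*x^2 - 2*x^3))^s := by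
    have h1 : (1-x)^(2*s-1) * (1-x) = (1-x)^(2*s) := by
      rw [← pow_succ]; congr 1; omega
    calc (1-x)^(2*s-1) * (1+2*x)^s * (1-x)
        = ((1-x)^(2*s-1) * (1-x)) * (1+2*x)^s := by ring
      _ = (1-x)^(2*s) * (1+2*x)^s := by rw [h1]
      _ = ((1-x)^2)^s * (1+2*x)^s := by rw [← pow_mul, mul_comm 2 s, pow_mul]
      _ = ((1-x)^2 * (1+2*x))^s := by rw [← mul_pow]
      _ = (1 - (3*x^2 - 2*x^3))^s := by ring_nf
  have ha2 : (0:ℝ) ≤ (s:ℝ)*((s:ℝ)-1)/2 := by nlinarith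
  have ha3 : (0:ℝ) ≤ (s:ℝ)*((s:ℝ)-1)*((s:ℝ)-2)/6 := by
    have hcase : s = 1 ∨ 2 ≤ s := by omega
    rcases hcase with h | h
    · subst h; norm_num
    · have h2 : (2:ℝ) ≤ (s:ℝ) := by exact_mod_cast h
      have := mul_nonneg (mul_nonneg (show (0:ℝ) ≤ (s:ℝ) by linarith)
        (show (0:ℝ) ≤ (s:ℝ)-1 by linarith)) (show (0:ℝ) ≤ (s:ℝ)-2 by linarith)
      linarith
  have hu3 : (3*x^2 - 2*x^3)^3 ≤ 27*x^6 := by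
    have h := pow_le_pow_left₀ hu0 (show 3*x^2-2*x^3 ≤ 3*x^2 by nlinarith) 3
    nlinarith [h]
  have hcaseR : (s:ℝ) = 1 ∨ 2 ≤ (s:ℝ) := by
    have : s = 1 ∨ 2 ≤ s := by omega
    rcases this with h | h
    · left; exact_mod_cast congrArg (Nat.cast : ℕ → ℝ) h
    · right; exact_mod_cast h
  have hL2 := L2_nonneg (s:ℝ) x hcaseR hσ hx0 hsx
  have hL2L : (1 - 3*(s:ℝ)*x^2 + 2*(s:ℝ)*x^3 + 9*((s:ℝ)*((s:ℝ)-1)/2)*x^4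
      - 12*((s:ℝ)*((s:ℝ)-1)/2)*x^5 - 27*((s:ℝ)*((s:ℝ)-1)*((s:ℝ)-2)/6)*x^6)
      ≤ 1 - (s:ℝ)*(3*x^2-2*x^3) + (s:ℝ)*((s:ℝ)-1)/2*(3*x^2-2*x^3)^2
        - (s:ℝ)*((s:ℝ)-1)*((s:ℝ)-2)/6*(3*x^2-2*x^3)^3 := by
    have h1 : (0:ℝ) ≤ ((s:ℝ)*((s:ℝ)-1)/2) * (4*x^6) := mul_nonneg ha2 (by positivity)
    have h2 : (0:ℝ) ≤ ((s:ℝ)*((s:ℝ)-1)*((s:ℝ)-2)/6) * (27*x^6 - (3*x^2-2*x^3)^3) :=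
      mul_nonneg ha3 (by linarith)
    have hid : (1 - (s:ℝ)*(3*x^2-2*x^3) + (s:ℝ)*((s:ℝ)-1)/2*(3*x^2-2*x^3)^2
        - (s:ℝ)*((s:ℝ)-1)*((s:ℝ)-2)/6*(3*x^2-2*x^3)^3)
        - (1 - 3*(s:ℝ)*x^2 + 2*(s:ℝ)*x^3 + 9*((s:ℝ)*((s:ℝ)-1)/2)*x^4
          - 12*((s:ℝ)*((s:ℝ)-1)/2)*x^5 - 27*((s:ℝ)*((s:ℝ)-1)*((s:ℝ)-2)/6)*x^6)
        = ((s:ℝ)*((s:ℝ)-1)/2) * (4*x^6)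
          + ((s:ℝ)*((s:ℝ)-1)*((s:ℝ)-2)/6) * (27*x^6 - (3*x^2-2*x^3)^3) := by ring
    linarith [h1, h2, hid.ge, hid.le]
  have h14 : (1+x+x^2+x^3)*(1-x) ≤ 1 := by nlinarith [pow_nonneg hx0 4]
  have hmain : ((1 - 3*(s:ℝ)*x^2 + 2*(s:ℝ)*x^3 + 9*((s:ℝ)*((s:ℝ)-1)/2)*x^4
      - 12*((s:ℝ)*((s:ℝ)-1)/2)*x^5 - 27*((s:ℝ)*((s:ℝ)-1)*((s:ℝ)-2)/6)*x^6)
      * (1+x+x^2+x^3)) * (1-x) ≤ (1 - (3*x^2 - 2*x^3))^s := by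
    have step1 : ((1 - 3*(s:ℝ)*x^2 + 2*(s:ℝ)*x^3 + 9*((s:ℝ)*((s:ℝ)-1)/2)*x^4
      - 12*((s:ℝ)*((s:ℝ)-1)/2)*x^5 - 27*((s:ℝ)*((s:ℝ)-1)*((s:ℝ)-2)/6)*x^6)
      * (1+x+x^2+x^3)) * (1-x)
        ≤ (1 - 3*(s:ℝ)*x^2 + 2*(s:ℝ)*x^3 + 9*((s:ℝ)*((s:ℝ)-1)/2)*x^4
      - 12*((s:ℝ)*((s:ℝ)-1)/2)*x^5 - 27*((s:ℝ)*((s:ℝ)-1)*((s:ℝ)-2)/6)*x^6) := by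
      calc ((1 - 3*(s:ℝ)*x^2 + 2*(s:ℝ)*x^3 + 9*((s:ℝ)*((s:ℝ)-1)/2)*x^4
        - 12*((s:ℝ)*((s:ℝ)-1)/2)*x^5 - 27*((s:ℝ)*((s:ℝ)-1)*((s:ℝ)-2)/6)*x^6)
        * (1+x+x^2+x^3)) * (1-x)
          = (1 - 3*(s:ℝ)*x^2 + 2*(s:ℝ)*x^3 + 9*((s:ℝ)*((s:ℝ)-1)/2)*x^4
        - 12*((s:ℝ)*((s:ℝ)-1)/2)*x^5 - 27*((s:ℝ)*((s:ℝ)-1)*((s:ℝ)-2)/6)*x^6)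
        * ((1+x+x^2+x^3)*(1-x)) := by ring
        _ ≤ (1 - 3*(s:ℝ)*x^2 + 2*(s:ℝ)*x^3 + 9*((s:ℝ)*((s:ℝ)-1)/2)*x^4
        - 12*((s:ℝ)*((s:ℝ)-1)/2)*x^5 - 27*((s:ℝ)*((s:ℝ)-1)*((s:ℝ)-2)/6)*x^6) * 1 :=
          mul_le_mul_of_nonneg_left h14 hL2
        _ = _ := mul_one _
    calc _ ≤ _ := step1
      _ ≤ 1 - (s:ℝ)*(3*x^2-2*x^3) + (s:ℝ)*((s:ℝ)-1)/2*(3*x^2-2*x^3)^2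
        - (s:ℝ)*((s:ℝ)-1)*((s:ℝ)-2)/6*(3*x^2-2*x^3)^3 := hL2L
      _ ≤ (1 - (3*x^2 - 2*x^3))^s := hbin
  rw [← hpow] at hmain
  exact le_of_mul_le_mul_right hmain hx1

/-- For every integer `s ≥ 1`,
`∫_0^1 (1 - v/(2s))^{2s-1} (1 + v/s)^s dv ≥ 1 + 5/(96 s²) - 1/(80 s³) + 1/(96 s⁴)`,
and in particular the integral is strictly greater than `1`. -/
theorem integral_r0_first (s : ℕ) (hs : 1 ≤ s) :
    (∫ v in (0:ℝ)..1, (1 - v / (2 * (s : ℝ))) ^ (2 * s - 1) * (1 + v / (s : ℝ)) ^ s)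
        ≥ 1 + 5 / (96 * (s : ℝ) ^ 2) - 1 / (80 * (s : ℝ) ^ 3) + 1 / (96 * (s : ℝ) ^ 4) ∧
      (∫ v in (0:ℝ)..1, (1 - v / (2 * (s : ℝ))) ^ (2 * s - 1) * (1 + v / (s : ℝ)) ^ s) > 1 := by
  have hσ : (1:ℝ) ≤ (s:ℝ) := by exact_mod_cast hs
  have hσ0 : (0:ℝ) < (s:ℝ) := by linarith
  set σ : ℝ := (s:ℝ) with hσdef
  have hσne : σ ≠ 0 := ne_of_gt hσ0
  -- the polynomial lower bound g
  set g : ℝ → ℝ := fun v =>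
    (1 - 3*σ*(v/(2*σ))^2 + 2*σ*(v/(2*σ))^3 + 9*(σ*(σ-1)/2)*(v/(2*σ))^4
        - 12*(σ*(σ-1)/2)*(v/(2*σ))^5 - 27*(σ*(σ-1)*(σ-2)/6)*(v/(2*σ))^6)
        * (1+(v/(2*σ))+(v/(2*σ))^2+(v/(2*σ))^3) with hg
  have hgcont : Continuous g := by
    rw [hg]; fun_prop
  have hfcont : Continuous (fun v : ℝ => (1 - v / (2 * σ)) ^ (2 * s - 1) * (1 + v / σ) ^ s) := by
    fun_prop
  -- pointwise bound
  have hpt : ∀ v ∈ Set.Icc (0:ℝ) 1,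
      g v ≤ (1 - v / (2 * σ)) ^ (2 * s - 1) * (1 + v / σ) ^ s := by
    intro v hv
    obtain ⟨hv0, hv1⟩ := hv
    have hx0 : (0:ℝ) ≤ v/(2*σ) := by positivity
    have hsx : σ*(v/(2*σ)) ≤ 1/2 := by
      rw [show σ*(v/(2*σ)) = v/2 by field_simp]
      linarith
    have h := ptwise s hs (v/(2*σ)) hx0 (by rw [hσdef] at hsx ⊢; exact_mod_cast hsx)
    have h2 : 1 + 2*(v/(2*σ)) = 1 + v/σ := by field_simp
    rw [h2] at h
    exact h
  -- integral monotonicity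
  have hmono : (∫ v in (0:ℝ)..1, g v)
      ≤ ∫ v in (0:ℝ)..1, (1 - v / (2 * σ)) ^ (2 * s - 1) * (1 + v / σ) ^ s :=
    intervalIntegral.integral_mono_on (by norm_num)
      (hgcont.intervalIntegrable 0 1) (hfcont.intervalIntegrable 0 1) hpt
  -- compute the integral of g by FTC
  set F : ℝ → ℝ := fun w => 2*σ * ((fun y : ℝ => y + (1/2)*y^2 + ((1-3*σ)/3)*y^3 + ((1-σ)/4)*y^4
          + ((9*σ^2-11*σ)/10)*y^5 + ((σ-3*σ^2)/12)*y^6 + ((-9*σ^3+24*σ^2-11*σ)/14)*y^7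
          + ((-9*σ^3+24*σ^2-15*σ)/16)*y^8 + ((-9*σ^3+15*σ^2-6*σ)/18)*y^9
          + ((-9*σ^3+27*σ^2-18*σ)/20)*y^10) (w/(2*σ))) with hFdef
  have hftc : (∫ v in (0:ℝ)..1, g v) = F 1 - F 0 := by
    apply intervalIntegral.integral_eq_sub_of_hasDerivAt
    · intro v hv
      have hx : HasDerivAt (fun w : ℝ => w/(2*σ)) (1/(2*σ)) v := by
        simpa using (hasDerivAt_id v).div_const (2*σ)
      set y : ℝ := v/(2*σ) with hy
      have hcomb := (((((((((hasDerivAt_id y).add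
        ((hasDerivAt_pow 2 y).const_mul ((1:ℝ)/2))).add
        ((hasDerivAt_pow 3 y).const_mul ((1-3*σ)/3))).add
        ((hasDerivAt_pow 4 y).const_mul ((1-σ)/4))).add
        ((hasDerivAt_pow 5 y).const_mul ((9*σ^2-11*σ)/10))).add
        ((hasDerivAt_pow 6 y).const_mul ((σ-3*σ^2)/12))).add
        ((hasDerivAt_pow 7 y).const_mul ((-9*σ^3+24*σ^2-11*σ)/14))).add
        ((hasDerivAt_pow 8 y).const_mul ((-9*σ^3+24*σ^2-15*σ)/16))).add
        ((hasDerivAt_pow 9 y).const_mul ((-9*σ^3+15*σ^2-6*σ)/18))).add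
        ((hasDerivAt_pow 10 y).const_mul ((-9*σ^3+27*σ^2-18*σ)/20))
      have h2 := (hcomb.comp v hx).const_mul (2*σ)
      simp only [Function.comp] at h2
      convert h2 using 1
      · rfl
      · rfl
      rw [hg]
      simp only [hy, id_eq]
      push_cast
      field_simp
      ring
    · exact hgcont.intervalIntegrable 0 1
  -- evaluate and compare
  have hval : (∫ v in (0:ℝ)..1, g v)
      = 2*σ * ((1/(2*σ)) + (1/2)*(1/(2*σ))^2 + ((1-3*σ)/3)*(1/(2*σ))^3 + ((1-σ)/4)*(1/(2*σ))^4
          + ((9*σ^2-11*σ)/10)*(1/(2*σ))^5 + ((σ-3*σ^2)/12)*(1/(2*σ))^6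
          + ((-9*σ^3+24*σ^2-11*σ)/14)*(1/(2*σ))^7 + ((-9*σ^3+24*σ^2-15*σ)/16)*(1/(2*σ))^8
          + ((-9*σ^3+15*σ^2-6*σ)/18)*(1/(2*σ))^9 + ((-9*σ^3+27*σ^2-18*σ)/20)*(1/(2*σ))^10) := by
    rw [hftc, hFdef]
    norm_num
  have hNid : (∫ v in (0:ℝ)..1, g v)
      - (1 + 5 / (96 * σ^2) - 1 / (80 * σ^3) + 1 / (96 * σ^4))
      = (72576*σ^7 - 55296*σ^6 + 18810*σ^5 - 3240*σ^4 - 6384*σ^3 + 1722*σ^2 - 2268*σ)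
        / (1290240*σ^9) := by
    rw [hval]
    field_simp
    ring
  have hN : (0:ℝ) ≤ 72576*σ^7 - 55296*σ^6 + 18810*σ^5 - 3240*σ^4 - 6384*σ^3 + 1722*σ^2 - 2268*σ := by
    have p1 : σ ≤ σ^7 := le_self_pow₀ hσ (by norm_num)
    have p3 : σ^3 ≤ σ^7 := pow_le_pow_right₀ hσ (by norm_num)
    have p4 : σ^4 ≤ σ^7 := pow_le_pow_right₀ hσ (by norm_num)
    have p6 : σ^6 ≤ σ^7 := pow_le_pow_right₀ hσ (by norm_num)
    have p2 : (0:ℝ) ≤ σ^2 := by positivity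
    have p5 : (0:ℝ) ≤ σ^5 := by positivity
    linarith
  have hQ : (0:ℝ) ≤ (72576*σ^7 - 55296*σ^6 + 18810*σ^5 - 3240*σ^4 - 6384*σ^3 + 1722*σ^2 - 2268*σ)
        / (1290240*σ^9) := by
    apply div_nonneg hN
    positivity
  have hfirst : (∫ v in (0:ℝ)..1, (1 - v / (2 * σ)) ^ (2 * s - 1) * (1 + v / σ) ^ s)
      ≥ 1 + 5 / (96 * σ^2) - 1 / (80 * σ^3) + 1 / (96 * σ^4) := by
    linarith [hNid.ge, hNid.le]
  constructor
  · exact hfirst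
  · have hpos : (0:ℝ) < 5 / (96 * σ^2) - 1 / (80 * σ^3) + 1 / (96 * σ^4) := by
      have hid2 : 5 / (96 * σ^2) - 1 / (80 * σ^3) + 1 / (96 * σ^4)
          = (50*σ^2 - 12*σ + 10) / (960*σ^4) := by
        field_simp
        ring
      rw [hid2]
      apply div_pos
      · nlinarith
      · positivity
    linarith
end

section
/- For every integer s ≥ 2, the integral I_s = ∫_{0}^{1} (1 − v/(2s+1))^{2s} (1 + v/(s−1))^{s−1} dv satisfies I_s < 1. -/
open intervalIntegral Real

noncomputable def LL (b : ℝ) : ℝ := 33600*b^9*(2*b+3)^7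
noncomputable def Q0 (b : ℝ) : ℝ := ((-3) + (20) * b^2) * (1680*b^7*(2*b+3)^7)
noncomputable def Q1 (b : ℝ) : ℝ := -(33600*b^9*(2*b+3)^7)
noncomputable def Q2 (b : ℝ) : ℝ := ((-9) + (-9) * b + (60) * b^2 + (40) * b^3) * (840*b^6*(2*b+3)^6)
noncomputable def Q3 (b : ℝ) : ℝ := ((27) + (36) * b + (-171) * b^2 + (-420) * b^3 + (-380) * b^4 + (-120) * b^5) * (560*b^5*(2*b+3)^5)
noncomputable def Q4 (b : ℝ) : ℝ := ((-162) + (-405) * b + (648) * b^2 + (3537) * b^3 + (4806) * b^4 + (2600) * b^5 + (480) * b^6) * (210*b^4*(2*b+3)^4)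
noncomputable def Q5 (b : ℝ) : ℝ := ((486) + (1701) * b + (-729) * b^2 + (-12699) * b^3 + (-25245) * b^4 + (-23730) * b^5 + (-12480) * b^6 + (-3680) * b^7 + (-480) * b^8) * (168*b^3*(2*b+3)^3)
noncomputable def Q6 (b : ℝ) : ℝ := ((-5832) + (-25758) * b + (-10287) * b^2 + (158625) * b^3 + (440487) * b^4 + (571905) * b^5 + (431040) * b^6 + (192796) * b^7 + (47120) * b^8 + (4800) * b^9) * (35*b^2*(2*b+3)^2)
noncomputable def Q7 (b : ℝ) : ℝ := ((87480) + (462186) * b + (494991) * b^2 + (-2216160) * b^3 + (-8651610) * b^4 + (-14491926) * b^5 + (-14432481) * b^6 + (-9224100) * b^7 + (-3841580) * b^8 + (-1021200) * b^9 + (-160320) * b^10 + (-11520) * b^11) * (6*b*(2*b+3))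
noncomputable def E7 (b : ℝ) : ℝ := 21 * ((-524880) + (-3210516) * b + (-5315868) * b^2 + (10626633) * b^3 + (62759610) * b^4 + (131111946) * b^5 + (162722628) * b^6 + (133746957) * b^7 + (75289350) * b^8 + (28916980) * b^9 + (7268680) * b^10 + (1076960) * b^11 + (71040) * b^12)
noncomputable def E8 (b : ℝ) : ℝ := 6 * ((874800) + (4884300) * b + (6336468) * b^2 + (-20676627) * b^3 + (-93164580) * b^4 + (-170874090) * b^5 + (-187800588) * b^6 + (-135538443) * b^7 + (-66088100) * b^8 + (-21736740) * b^9 + (-4666800) * b^10 + (-596160) * b^11 + (-34560) * b^12)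

noncomputable def PN (b v : ℝ) : ℝ :=
  Q0 b + Q1 b * v + Q2 b * v^2 + Q3 b * v^3 + Q4 b * v^4 + Q5 b * v^5 + Q6 b * v^6 + Q7 b * v^7

noncomputable def PdN (b v : ℝ) : ℝ :=
  Q1 b + Q2 b * (2*v) + Q3 b * (3*v^2) + Q4 b * (4*v^3) + Q5 b * (5*v^4) + Q6 b * (6*v^5) + Q7 b * (7*v^6)

noncomputable def GgS (s : ℕ) (b : ℝ) : ℝ → ℝ := fun v =>
  -((1 - v/(2*b+3))^(2*s+1) * ((1 + v/b)^(s-1) * PN b v))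

noncomputable def GgdS (s : ℕ) (b : ℝ) (v : ℝ) : ℝ :=
  (1 - v/(2*b+3))^(2*s) * ((1 + v/b)^(s-1) * PN b v)
  - (1 - v/(2*b+3))^(2*s+1) * ((1 + v/b)^(s-2) * PN b v + (1 + v/b)^(s-1) * PdN b v)

lemma cert_E7 (b : ℝ) (hb : 2 ≤ b) : 0 ≤ E7 b := by
  have h2 : (0:ℝ) ≤ b - 2 := by linarith
  unfold E7
  nlinarith [pow_nonneg h2 2, pow_nonneg h2 3, pow_nonneg h2 4, pow_nonneg h2 5,
    pow_nonneg h2 6, pow_nonneg h2 7, pow_nonneg h2 8, pow_nonneg h2 9,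
    pow_nonneg h2 10, pow_nonneg h2 11, pow_nonneg h2 12, h2]

lemma cert_E78 (b : ℝ) (hb : 2 ≤ b) : 0 ≤ E7 b + E8 b := by
  have h2 : (0:ℝ) ≤ b - 2 := by linarith
  unfold E7 E8
  nlinarith [pow_nonneg h2 2, pow_nonneg h2 3, pow_nonneg h2 4, pow_nonneg h2 5,
    pow_nonneg h2 6, pow_nonneg h2 7, pow_nonneg h2 8, pow_nonneg h2 9,
    pow_nonneg h2 10, pow_nonneg h2 11, pow_nonneg h2 12, h2]

lemma cert_phi1 (b : ℝ) (hb : 2 ≤ b) : PN b 1 ≤ 0 := by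
  have h2 : (0:ℝ) ≤ b - 2 := by linarith
  have hb0 : (0:ℝ) < b := by linarith
  have ha0 : (0:ℝ) < 2*b+3 := by linarith
  have key : PN b 1 = -((((-524880) + (-2160756) * b + (-591948) * b^2 + (13547007) * b^3 + (36229275) * b^4 + (48205611) * b^5 + (47674053) * b^6 + (44448498) * b^7 + (34897260) * b^8 + (18337160) * b^9 + (5475520) * b^10 + (741120) * b^11 + (17920) * b^12)) * (b*(2*b+3))) := by
    unfold PN Q0 Q1 Q2 Q3 Q4 Q5 Q6 Q7; ring
  rw [key, neg_nonpos]
  apply mul_nonneg _ (by positivity)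
  nlinarith [pow_nonneg h2 2, pow_nonneg h2 3, pow_nonneg h2 4, pow_nonneg h2 5,
    pow_nonneg h2 6, pow_nonneg h2 7, pow_nonneg h2 8, pow_nonneg h2 9,
    pow_nonneg h2 10, pow_nonneg h2 11, pow_nonneg h2 12, h2]

lemma cert_drop (b : ℝ) (hb : 2 ≤ b) : PN b 0 - PN b 1 < LL b := by
  have h2 : (0:ℝ) ≤ b - 2 := by linarith
  have hb0 : (0:ℝ) < b := by linarith
  have ha0 : (0:ℝ) < 2*b+3 := by linarith
  have key : PN b 0 - PN b 1 = LL b - (((524880) + (2160756) * b + (591948) * b^2 + (-13547007) * b^3 + (-36229275) * b^4 + (-48205611) * b^5 + (-43999893) * b^6 + (-29751858) * b^7 + (-10402860) * b^8 + (3435640) * b^9 + (5410880) * b^10 + (2161920) * b^11 + (304640) * b^12)) * (b*(2*b+3)) := by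
    unfold PN LL Q0 Q1 Q2 Q3 Q4 Q5 Q6 Q7; ring
  rw [key]
  have hpos : 0 < (((524880) + (2160756) * b + (591948) * b^2 + (-13547007) * b^3 + (-36229275) * b^4 + (-48205611) * b^5 + (-43999893) * b^6 + (-29751858) * b^7 + (-10402860) * b^8 + (3435640) * b^9 + (5410880) * b^10 + (2161920) * b^11 + (304640) * b^12)) * (b*(2*b+3)) := by
    apply mul_pos _ (by positivity)
    nlinarith [pow_nonneg h2 2, pow_nonneg h2 3, pow_nonneg h2 4, pow_nonneg h2 5,
    pow_nonneg h2 6, pow_nonneg h2 7, pow_nonneg h2 8, pow_nonneg h2 9,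
    pow_nonneg h2 10, pow_nonneg h2 11, pow_nonneg h2 12, h2]
  linarith

lemma hasDeriv_PN (b v : ℝ) : HasDerivAt (fun v => PN b v) (PdN b v) v := by
  have h : HasDerivAt (fun v : ℝ =>
      Q0 b + Q1 b * v + Q2 b * v^2 + Q3 b * v^3 + Q4 b * v^4 + Q5 b * v^5 + Q6 b * v^6 + Q7 b * v^7)
      (0 + Q1 b * 1 + Q2 b * ((2:ℕ) * v^(2-1)) + Q3 b * ((3:ℕ) * v^(3-1)) + Q4 b * ((4:ℕ) * v^(4-1))
        + Q5 b * ((5:ℕ) * v^(5-1)) + Q6 b * ((6:ℕ) * v^(6-1)) + Q7 b * ((7:ℕ) * v^(7-1))) v := by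
    exact ((((((((hasDerivAt_const v (Q0 b)).add ((hasDerivAt_id v).const_mul (Q1 b))).add
      ((hasDerivAt_pow 2 v).const_mul (Q2 b))).add
      ((hasDerivAt_pow 3 v).const_mul (Q3 b))).add
      ((hasDerivAt_pow 4 v).const_mul (Q4 b))).add
      ((hasDerivAt_pow 5 v).const_mul (Q5 b))).add
      ((hasDerivAt_pow 6 v).const_mul (Q6 b))).add
      ((hasDerivAt_pow 7 v).const_mul (Q7 b)))
  have h2 : HasDerivAt (fun v => PN b v)
      (0 + Q1 b * 1 + Q2 b * ((2:ℕ) * v^(2-1)) + Q3 b * ((3:ℕ) * v^(3-1)) + Q4 b * ((4:ℕ) * v^(4-1))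
        + Q5 b * ((5:ℕ) * v^(5-1)) + Q6 b * ((6:ℕ) * v^(6-1)) + Q7 b * ((7:ℕ) * v^(7-1))) v := h
  convert h2 using 1
  unfold PdN
  norm_num

lemma hasDeriv_GgS (s : ℕ) (hs : 3 ≤ s) (b : ℝ) (hb : 2 ≤ b) (hsb : (s:ℝ) = b + 1) (v : ℝ) :
    HasDerivAt (GgS s b) (GgdS s b v) v := by
  have hb0 : (0:ℝ) < b := by linarith
  have ha0 : (0:ℝ) < 2*b+3 := by linarith
  have hbne : b ≠ 0 := ne_of_gt hb0
  have hane : (2*b+3) ≠ 0 := ne_of_gt ha0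
  have hw : HasDerivAt (fun v : ℝ => (1 - v/(2*b+3))^(2*s+1)) (-((1 - v/(2*b+3))^(2*s))) v := by
    have h := (((hasDerivAt_id v).div_const (2*b+3)).const_sub (1:ℝ)).pow (2*s+1)
    refine h.congr_deriv ?_
    simp only [id]
    have h1 : 2*s+1-1 = 2*s := by omega
    rw [h1]
    push_cast
    rw [hsb]
    field_simp
    ring
  have hu : HasDerivAt (fun v : ℝ => (1 + v/b)^(s-1)) ((1 + v/b)^(s-2)) v := by
    have h := (((hasDerivAt_id v).div_const b).const_add (1:ℝ)).pow (s-1)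
    refine h.congr_deriv ?_
    simp only [id]
    have h1 : s-1-1 = s-2 := by omega
    have h2 : ((s-1 : ℕ):ℝ) = b := by
      rw [Nat.cast_sub (by omega : 1 ≤ s), hsb]; ring
    rw [h1, h2]
    field_simp
  have hP := hasDeriv_PN b v
  have h := (hw.mul (hu.mul hP)).neg
  refine h.congr_deriv ?_
  unfold GgdS
  simp only [Pi.mul_apply]
  ring

set_option maxHeartbeats 1600000 in
lemma key_id (s : ℕ) (hs : 3 ≤ s) (b : ℝ) (hb : 2 ≤ b) (v : ℝ) :
    GgdS s b v - LL b * ((1 - v/(2*b+3))^(2*s) * (1 + v/b)^(s-1))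
    = (1 - v/(2*b+3))^(2*s) * ((1 + v/b)^(s-2) * (v^7 * (E7 b + E8 b * v))) := by
  have hb0 : (0:ℝ) < b := by linarith
  have ha0 : (0:ℝ) < 2*b+3 := by linarith
  have hbne : b ≠ 0 := ne_of_gt hb0
  have hane : (2*b+3) ≠ 0 := ne_of_gt ha0
  have h1 : s - 1 = (s-2) + 1 := by omega
  unfold GgdS LL E7 E8 PN PdN Q0 Q1 Q2 Q3 Q4 Q5 Q6 Q7
  rw [h1]
  simp only [pow_succ]
  generalize (1 - v/(2*b+3))^(2*s) = X
  generalize (1 + v/b)^(s-2) = Y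
  field_simp
  ring

lemma aux_main (s : ℕ) (hs : 3 ≤ s) :
    (∫ v in (0:ℝ)..1,
        (1 - v / (2 * ((s:ℝ)-1) + 3)) ^ (2 * s) * (1 + v / ((s : ℝ) - 1)) ^ (s - 1)) < 1 := by
  set b : ℝ := (s:ℝ) - 1 with hbdef
  have hsb : (s:ℝ) = b + 1 := by rw [hbdef]; ring
  have hb : (2:ℝ) ≤ b := by
    have : (3:ℝ) ≤ (s:ℝ) := by exact_mod_cast hs
    rw [hbdef]; linarith
  have hb0 : (0:ℝ) < b := by linarith
  have ha0 : (0:ℝ) < 2*b+3 := by linarith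
  have hbne : b ≠ 0 := ne_of_gt hb0
  have hane : (2*b+3) ≠ 0 := ne_of_gt ha0
  have hLpos : 0 < LL b := by unfold LL; positivity
  have hcontf : Continuous (fun v : ℝ => (1 - v / (2*b+3)) ^ (2*s) * (1 + v / b) ^ (s-1)) := by
    fun_prop
  have hcontfL : Continuous (fun v : ℝ => LL b * ((1 - v / (2*b+3)) ^ (2*s) * (1 + v / b) ^ (s-1))) := by
    fun_prop
  have hcontG : Continuous (GgdS s b) := by
    unfold GgdS PN PdN
    fun_prop
  have hptwise : ∀ v ∈ Set.Icc (0:ℝ) 1,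
      LL b * ((1 - v / (2*b+3)) ^ (2*s) * (1 + v / b) ^ (s-1)) ≤ GgdS s b v := by
    intro v hv
    obtain ⟨hv0, hv1⟩ := hv
    have hkey := key_id s hs b hb v
    have hwpos : (0:ℝ) ≤ 1 - v/(2*b+3) := by
      rw [sub_nonneg, div_le_one ha0]; linarith
    have hupos : (0:ℝ) ≤ 1 + v/b := by positivity
    have hd7 := cert_E7 b hb
    have hd78 := cert_E78 b hb
    have hlin : 0 ≤ E7 b + E8 b * v := by
      nlinarith [mul_nonneg (sub_nonneg.2 hv1) hd7, mul_nonneg hv0 hd78]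
    have hrhs : 0 ≤ (1 - v/(2*b+3))^(2*s) * ((1 + v/b)^(s-2) * (v^7 * (E7 b + E8 b * v))) := by
      apply mul_nonneg (pow_nonneg hwpos _)
      apply mul_nonneg (pow_nonneg hupos _)
      exact mul_nonneg (pow_nonneg hv0 _) hlin
    linarith [hkey ▸ hrhs]
  have hint : (∫ v in (0:ℝ)..1, LL b * ((1 - v / (2*b+3)) ^ (2*s) * (1 + v / b) ^ (s-1)))
      ≤ ∫ v in (0:ℝ)..1, GgdS s b v := by
    apply intervalIntegral.integral_mono_on (by norm_num)
      (hcontfL.intervalIntegrable 0 1) (hcontG.intervalIntegrable 0 1) hptwise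
  have heval : (∫ v in (0:ℝ)..1, GgdS s b v) = GgS s b 1 - GgS s b 0 := by
    apply intervalIntegral.integral_eq_sub_of_hasDerivAt
    · intro v _
      exact hasDeriv_GgS s hs b hb hsb v
    · exact hcontG.intervalIntegrable 0 1
  have hconst : (∫ v in (0:ℝ)..1, LL b * ((1 - v / (2*b+3)) ^ (2*s) * (1 + v / b) ^ (s-1)))
      = LL b * ∫ v in (0:ℝ)..1, (1 - v / (2*b+3)) ^ (2*s) * (1 + v / b) ^ (s-1) := by
    exact intervalIntegral.integral_const_mul _ _
  have hend : GgS s b 1 - GgS s b 0 < LL b := by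
    have hphi1 := cert_phi1 b hb
    have hdrop := cert_drop b hb
    have hq1 : (1 - 1/(2*b+3))^(2*s+1) ≤ Real.exp (-1) := by
      have he : (1:ℝ) - 1/(2*b+3) ≤ Real.exp (-(1/(2*b+3))) := by
        have := Real.add_one_le_exp (-(1/(2*b+3)))
        linarith
      have hn : (0:ℝ) ≤ 1 - 1/(2*b+3) := by
        rw [sub_nonneg, div_le_one ha0]; linarith
      calc (1 - 1/(2*b+3))^(2*s+1) ≤ (Real.exp (-(1/(2*b+3))))^(2*s+1) :=
            pow_le_pow_left₀ hn he (2*s+1)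
        _ = Real.exp (((2*s+1 : ℕ):ℝ) * (-(1/(2*b+3)))) := by
            rw [← Real.exp_nat_mul]
        _ = Real.exp (-1) := by
            congr 1
            push_cast
            rw [hsb]
            field_simp
            ring
    have hq2 : (1 + 1/b)^(s-1) ≤ Real.exp 1 := by
      have he : (1:ℝ) + 1/b ≤ Real.exp (1/b) := by
        have := Real.add_one_le_exp (1/b)
        linarith
      have hn : (0:ℝ) ≤ 1 + 1/b := by positivity
      calc (1 + 1/b)^(s-1) ≤ (Real.exp (1/b))^(s-1) := pow_le_pow_left₀ hn he (s-1)
        _ = Real.exp (((s-1 : ℕ):ℝ) * (1/b)) := by rw [← Real.exp_nat_mul]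
        _ = Real.exp 1 := by
            congr 1
            rw [Nat.cast_sub (by omega : 1 ≤ s), hsb]
            field_simp
            push_cast; ring
    have hq1n : (0:ℝ) ≤ (1 - 1/(2*b+3))^(2*s+1) := by
      apply pow_nonneg
      rw [sub_nonneg, div_le_one ha0]; linarith
    have hq2n : (0:ℝ) ≤ (1 + 1/b)^(s-1) := by positivity
    have hqq : (1 - 1/(2*b+3))^(2*s+1) * (1 + 1/b)^(s-1) ≤ 1 := by
      calc (1 - 1/(2*b+3))^(2*s+1) * (1 + 1/b)^(s-1)
          ≤ Real.exp (-1) * Real.exp 1 := by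
            apply mul_le_mul hq1 hq2 hq2n (Real.exp_nonneg _)
        _ = 1 := by rw [← Real.exp_add]; norm_num
    unfold GgS
    simp only [zero_div, sub_zero, add_zero, one_pow, one_mul, sub_neg_eq_add]
    nlinarith [mul_nonneg hq1n hq2n, hphi1, hdrop, hqq,
      mul_nonneg (mul_nonneg hq1n hq2n) (neg_nonneg.2 hphi1)]
  have hfinal : LL b * (∫ v in (0:ℝ)..1,
      (1 - v / (2*b+3)) ^ (2*s) * (1 + v / b) ^ (s-1)) < LL b * 1 := by
    rw [mul_one]
    calc LL b * (∫ v in (0:ℝ)..1, (1 - v / (2*b+3)) ^ (2*s) * (1 + v / b) ^ (s-1))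
        = ∫ v in (0:ℝ)..1, LL b * ((1 - v / (2*b+3)) ^ (2*s) * (1 + v / b) ^ (s-1)) := hconst.symm
      _ ≤ ∫ v in (0:ℝ)..1, GgdS s b v := hint
      _ = GgS s b 1 - GgS s b 0 := heval
      _ < LL b := hend
  have := (mul_lt_mul_iff_right₀ hLpos).mp hfinal
  convert this using 2 <;> ring

/-- For every integer `s ≥ 2`,
`I_s = ∫_0^1 (1 - v/(2s+1))^{2s} (1 + v/(s-1))^{s-1} dv < 1`. -/
theorem Is_lt_one (s : ℕ) (hs : 2 ≤ s) :
    (∫ v in (0:ℝ)..1,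
        (1 - v / (2 * (s : ℝ) + 1)) ^ (2 * s) * (1 + v / ((s : ℝ) - 1)) ^ (s - 1)) < 1 := by
  rcases Nat.lt_or_ge s 3 with h3 | h3
  · have hs2 : s = 2 := by omega
    subst hs2
    norm_num
    have hder : ∀ v ∈ Set.uIcc (0:ℝ) 1,
        HasDerivAt (fun v : ℝ => v + v^2/10 - (14/75)*v^3 + (13/250)*v^4 - (19/3125)*v^5 + v^6/3750)
          ((1 - v/5)^4 * (1+v)) v := by
      intro v _
      have h : HasDerivAt (fun v : ℝ => v + v^2/10 - (14/75)*v^3 + (13/250)*v^4 - (19/3125)*v^5 + v^6/3750)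
          (1 + ((2:ℕ) * v^(2-1))/10 - (14/75)*((3:ℕ) * v^(3-1)) + (13/250)*((4:ℕ) * v^(4-1))
            - (19/3125)*((5:ℕ) * v^(5-1)) + ((6:ℕ) * v^(6-1))/3750) v := by
        exact (((((hasDerivAt_id v).add ((hasDerivAt_pow 2 v).div_const 10)).sub
          ((hasDerivAt_pow 3 v).const_mul (14/75))).add
          ((hasDerivAt_pow 4 v).const_mul (13/250))).sub
          ((hasDerivAt_pow 5 v).const_mul (19/3125))).add
          ((hasDerivAt_pow 6 v).div_const 3750)
      convert h using 1
      norm_num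
      ring
    have hcont : Continuous (fun v : ℝ => (1 - v/5)^4 * (1+v)) := by fun_prop
    have heval := intervalIntegral.integral_eq_sub_of_hasDerivAt hder
      (hcont.intervalIntegrable 0 1)
    rw [heval]
    norm_num
  · have := aux_main s h3
    have hrw : (2 * ((s:ℝ)-1) + 3) = 2 * (s:ℝ) + 1 := by ring
    rw [hrw] at this
    exact this
end

section
/- For every integer s ≥ 1, the integral J_1 = ∫_{0}^{1} (1 − v/(2s+1))^{2s} (1 + v/s)^{s} dv satisfies J_1 ≥ 1 + 1/(12 (2s+1)²); in particular J_1 ≥ 1. -/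
/-- For every integer `s ≥ 1`,
`J_1 = ∫_0^1 (1 - v/(2s+1))^{2s} (1 + v/s)^s dv ≥ 1 + 1/(12(2s+1)²)`;
in particular `J_1 ≥ 1`. -/
theorem J1_ge (s : ℕ) (hs : 1 ≤ s) :
    (∫ v in (0:ℝ)..1,
        (1 - v / (2 * (s : ℝ) + 1)) ^ (2 * s) * (1 + v / (s : ℝ)) ^ s)
        ≥ 1 + 1 / (12 * (2 * (s : ℝ) + 1) ^ 2) ∧
      (∫ v in (0:ℝ)..1,
        (1 - v / (2 * (s : ℝ) + 1)) ^ (2 * s) * (1 + v / (s : ℝ)) ^ s) ≥ 1 := by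
  have hs' : (1:ℝ) ≤ (s:ℝ) := by exact_mod_cast hs
  have hspos : (0:ℝ) < (s:ℝ) := by linarith
  set D : ℝ := 2 * (s:ℝ) + 1 with hD
  have hDpos : 0 < D := by rw [hD]; linarith
  have hDne : D ≠ 0 := ne_of_gt hDpos
  have hsne : (s:ℝ) ≠ 0 := ne_of_gt hspos
  -- pointwise lower bound via Bernoulli
  have hpt : ∀ v ∈ Set.Icc (0:ℝ) 1,
      1 + v/D - (3*(s:ℝ)+2)*v^2/D^2 + v^3/D^2
        ≤ (1 - v / D) ^ (2 * s) * (1 + v / (s:ℝ)) ^ s := by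
    intro v hv
    obtain ⟨hv0, hv1⟩ := hv
    set a : ℝ := (1 - v/D)^2 * (1 + v/(s:ℝ)) - 1 with ha
    have h1 : (1 - v / D) ^ (2 * s) * (1 + v / (s:ℝ)) ^ s = (1 + a)^s := by
      rw [pow_mul, ← mul_pow, ha]
      ring_nf
    have hanneg : (0:ℝ) ≤ (1 - v/D)^2 * (1 + v/(s:ℝ)) := by positivity
    have hage : (-2:ℝ) ≤ a := by rw [ha]; linarith
    have hber := one_add_mul_le_pow hage s
    have heq : 1 + v/D - (3*(s:ℝ)+2)*v^2/D^2 + v^3/D^2 = 1 + (s:ℝ) * a := by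
      rw [ha, hD]
      field_simp
      ring
    rw [heq, h1]
    exact hber
  -- integrability
  have hcont : Continuous fun v : ℝ =>
      (1 - v / D) ^ (2 * s) * (1 + v / (s:ℝ)) ^ s := by fun_prop
  have hcont2 : Continuous fun v : ℝ =>
      1 + v/D - (3*(s:ℝ)+2)*v^2/D^2 + v^3/D^2 := by fun_prop
  -- exact integral of the lower bound
  have hF : ∀ v : ℝ, HasDerivAt
      (fun v : ℝ => v + v^2/(2*D) - (3*(s:ℝ)+2)*v^3/(3*D^2) + v^4/(4*D^2))
      (1 + v/D - (3*(s:ℝ)+2)*v^2/D^2 + v^3/D^2) v := by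
    intro v
    have h1 := hasDerivAt_id v
    have h2 := (hasDerivAt_pow 2 v).div_const (2*D)
    have h3 := ((hasDerivAt_pow 3 v).const_mul (3*(s:ℝ)+2)).div_const (3*D^2)
    have h4 := (hasDerivAt_pow 4 v).div_const (4*D^2)
    refine (((h1.add h2).sub h3).add h4).congr_deriv ?_
    field_simp
    ring
  have hint : (∫ v in (0:ℝ)..1,
      (1 + v/D - (3*(s:ℝ)+2)*v^2/D^2 + v^3/D^2)) = 1 + 1 / (12 * D^2) := by
    rw [intervalIntegral.integral_eq_sub_of_hasDerivAt (fun v _ => hF v)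
      (hcont2.intervalIntegrable 0 1)]
    rw [hD]
    field_simp
    ring
  have hmono : (∫ v in (0:ℝ)..1,
      (1 + v/D - (3*(s:ℝ)+2)*v^2/D^2 + v^3/D^2))
      ≤ ∫ v in (0:ℝ)..1, (1 - v / D) ^ (2 * s) * (1 + v / (s:ℝ)) ^ s := by
    apply intervalIntegral.integral_mono_on (by norm_num)
      (hcont2.intervalIntegrable 0 1) (hcont.intervalIntegrable 0 1)
    intro v hv
    exact hpt v hv
  rw [hint] at hmono
  have hfinal : (1:ℝ) + 1 / (12 * D^2)
      ≤ ∫ v in (0:ℝ)..1,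
        (1 - v / (2 * (s : ℝ) + 1)) ^ (2 * s) * (1 + v / (s : ℝ)) ^ s := by
    simpa [hD] using hmono
  have hpos : (0:ℝ) < 1 / (12 * D^2) := by positivity
  constructor
  · simpa [hD] using hfinal
  · have := hfinal
    rw [hD] at hpos ⊢
    linarith [hfinal]
end

section
/- For every integer s ≥ 1, the integral H_2 = ∫_{0}^{1} (1 − v/(2s+2))^{2s+1} (1 + v/s)^{s} dv satisfies H_2 < 1. -/
open Real intervalIntegral

-- exp bound
lemma exp_le_quadratic {x : ℝ} (h0 : 0 ≤ x) (h1 : x ≤ 1) :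
    Real.exp x ≤ 1 + x + x ^ 2 := by
  have hb := Real.exp_bound (x := x) (by rw [abs_of_nonneg h0]; exact h1) (n := 2) (by norm_num)
  have : |Real.exp x - (1 + x)| ≤ x ^ 2 * (3 / (2 * 2)) := by
    simpa [Finset.sum_range_succ, abs_of_nonneg h0] using hb
  have := abs_le.mp this
  nlinarith [sq_nonneg x]

-- integral of quintic
lemma integral_quintic (c0 c1 c2 c3 c4 c5 : ℝ) :
    (∫ v in (0:ℝ)..1, (c0 + c1*v + c2*v^2 + c3*v^3 + c4*v^4 + c5*v^5))
      = c0 + c1/2 + c2/3 + c3/4 + c4/5 + c5/6 := by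
  have h : ∀ v ∈ Set.uIcc (0:ℝ) 1,
      HasDerivAt (fun x : ℝ => c0*x + c1/2*x^2 + c2/3*x^3 + c3/4*x^4 + c4/5*x^5 + c5/6*x^6)
        (c0 + c1*v + c2*v^2 + c3*v^3 + c4*v^4 + c5*v^5) v := by
    intro v _
    have h1 : HasDerivAt (fun x : ℝ => c0*x) c0 v := by
      simpa using (hasDerivAt_id v).const_mul c0
    have h2 : HasDerivAt (fun x : ℝ => c1/2*x^2) (c1*v) v := by
      have := (hasDerivAt_pow 2 v).const_mul (c1/2)
      exact this.congr_deriv (by push_cast; ring)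
    have h3 : HasDerivAt (fun x : ℝ => c2/3*x^3) (c2*v^2) v := by
      have := (hasDerivAt_pow 3 v).const_mul (c2/3)
      exact this.congr_deriv (by push_cast; ring)
    have h4 : HasDerivAt (fun x : ℝ => c3/4*x^4) (c3*v^3) v := by
      have := (hasDerivAt_pow 4 v).const_mul (c3/4)
      exact this.congr_deriv (by push_cast; ring)
    have h5 : HasDerivAt (fun x : ℝ => c4/5*x^5) (c4*v^4) v := by
      have := (hasDerivAt_pow 5 v).const_mul (c4/5)
      exact this.congr_deriv (by push_cast; ring)
    have h6 : HasDerivAt (fun x : ℝ => c5/6*x^6) (c5*v^5) v := by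
      have := (hasDerivAt_pow 6 v).const_mul (c5/6)
      exact this.congr_deriv (by push_cast; ring)
    exact ((((h1.add h2).add h3).add h4).add h5).add h6
  have hint : IntervalIntegrable
      (fun v : ℝ => c0 + c1*v + c2*v^2 + c3*v^3 + c4*v^4 + c5*v^5) MeasureTheory.volume 0 1 := by
    apply Continuous.intervalIntegrable; fun_prop
  rw [intervalIntegral.integral_eq_sub_of_hasDerivAt h hint]
  norm_num

/-- For every integer `s ≥ 1`,
`H_2 = ∫_0^1 (1 - v/(2s+2))^{2s+1} (1 + v/s)^s dv < 1`. -/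
theorem H2_lt_one (s : ℕ) (hs : 1 ≤ s) :
    (∫ v in (0:ℝ)..1,
        (1 - v / (2 * (s : ℝ) + 2)) ^ (2 * s + 1) * (1 + v / (s : ℝ)) ^ s) < 1 := by
  have ht : (1:ℝ) ≤ (s:ℝ) := by exact_mod_cast hs
  set t : ℝ := (s:ℝ) with htdef
  have ht0 : (0:ℝ) < t := by linarith
  set u : ℝ := 1/(t+1) with hudef
  have hu0 : 0 < u := by positivity
  have hu2 : u ≤ 1/2 := by
    rw [hudef]; rw [div_le_div_iff₀ (by linarith) (by norm_num)]; linarith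
  -- pointwise bound
  have key : ∀ v ∈ Set.Icc (0:ℝ) 1,
      (1 - v / (2 * t + 2)) ^ (2 * s + 1) * (1 + v / t) ^ s
        ≤ 1 + (u/2)*v + (u^2/2 - 3*u/4)*v^2 + (-(9*u^2/8) - u^3/2)*v^3
            + (9*u^2/16 + 3*u^3/4)*v^4 + (-(9*u^3/32))*v^5 := by
    intro v hv
    obtain ⟨hv0, hv1⟩ := hv
    set x : ℝ := v / (2*t+2) with hxdef
    have hx0 : 0 ≤ x := by positivity
    have hx1 : x ≤ 1/4 := by
      rw [hxdef, div_le_div_iff₀ (by linarith) (by norm_num)]; linarith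
    set q : ℝ := (1-x)^2 * (1+v/t) with hqdef
    have hq0 : 0 ≤ q := by
      have : 0 ≤ 1 + v/t := by positivity
      positivity
    set W : ℝ := u * (v - 3*v^2/4) with hWdef
    have hW0 : 0 ≤ W := by
      have : 0 ≤ v - 3*v^2/4 := by nlinarith
      positivity
    have hW1 : W ≤ 1 := by nlinarith
    -- t*(q-1) ≤ W
    have hid : W - t*(q-1) = v^2*(1-v)/(4*(t+1)^2) := by
      rw [hWdef, hqdef, hxdef, hudef]
      field_simp
      ring
    have hw : t*(q-1) ≤ W := by
      have h2 : 0 ≤ v^2*(1-v)/(4*(t+1)^2) := by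
        have : 0 ≤ 1 - v := by linarith
        positivity
      linarith [hid ▸ h2]
    -- q^s ≤ 1 + W + W^2
    have hqs : q ^ s ≤ 1 + W + W^2 := by
      have h1 : q ≤ Real.exp (q - 1) := by
        have := Real.add_one_le_exp (q - 1); linarith
      have h2 : q ^ s ≤ Real.exp (q-1) ^ s := pow_le_pow_left₀ hq0 h1 s
      have h3 : Real.exp (q-1) ^ s = Real.exp (t * (q-1)) := by
        rw [← Real.exp_nat_mul]
      have h4 : Real.exp (t*(q-1)) ≤ Real.exp W := Real.exp_le_exp.mpr hw
      have h5 : Real.exp W ≤ 1 + W + W^2 := exp_le_quadratic hW0 hW1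
      calc q ^ s ≤ Real.exp (q-1) ^ s := h2
        _ = Real.exp (t*(q-1)) := h3
        _ ≤ Real.exp W := h4
        _ ≤ 1 + W + W^2 := h5
    -- assemble
    have hfact : (1 - v / (2 * t + 2)) ^ (2 * s + 1) * (1 + v / t) ^ s
        = (1 - x) * q ^ s := by
      rw [hqdef, hxdef, mul_pow, ← pow_mul, pow_succ, pow_mul]
      ring
    have hx1' : 0 ≤ 1 - x := by linarith
    have hstep : (1 - x) * q ^ s ≤ (1 - x) * (1 + W + W^2) :=
      mul_le_mul_of_nonneg_left hqs hx1'
    have hexp : (1 - x) * (1 + W + W^2)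
        = 1 + (u/2)*v + (u^2/2 - 3*u/4)*v^2 + (-(9*u^2/8) - u^3/2)*v^3
            + (9*u^2/16 + 3*u^3/4)*v^4 + (-(9*u^3/32))*v^5 := by
      have h2t : (2*t+2) ≠ 0 := by linarith
      have h1t : (t+1) ≠ 0 := by linarith
      have hx' : x = u*v/2 := by
        rw [hxdef, hudef]
        field_simp
        try ring
        try tauto
      rw [hWdef, hx']
      ring
    rw [hfact]
    linarith [hstep, hexp.le]
  -- integrability
  have hf_cont : Continuous (fun v : ℝ =>
      (1 - v / (2 * t + 2)) ^ (2 * s + 1) * (1 + v / t) ^ s) := by fun_prop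
  have hg_cont : Continuous (fun v : ℝ =>
      1 + (u/2)*v + (u^2/2 - 3*u/4)*v^2 + (-(9*u^2/8) - u^3/2)*v^3
        + (9*u^2/16 + 3*u^3/4)*v^4 + (-(9*u^3/32))*v^5) := by fun_prop
  have hmono : (∫ v in (0:ℝ)..1,
      (1 - v / (2 * t + 2)) ^ (2 * s + 1) * (1 + v / t) ^ s)
      ≤ ∫ v in (0:ℝ)..1,
        (1 + (u/2)*v + (u^2/2 - 3*u/4)*v^2 + (-(9*u^2/8) - u^3/2)*v^3
          + (9*u^2/16 + 3*u^3/4)*v^4 + (-(9*u^3/32))*v^5) :=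
    intervalIntegral.integral_mono_on (by norm_num)
      (hf_cont.intervalIntegrable 0 1) (hg_cont.intervalIntegrable 0 1) key
  have hval : (∫ v in (0:ℝ)..1,
      (1 + (u/2)*v + (u^2/2 - 3*u/4)*v^2 + (-(9*u^2/8) - u^3/2)*v^3
        + (9*u^2/16 + 3*u^3/4)*v^4 + (-(9*u^3/32))*v^5))
      = 1 - u^2/480 - 7*u^3/320 := by
    rw [integral_quintic]
    ring
  have hlt : (1:ℝ) - u^2/480 - 7*u^3/320 < 1 := by nlinarith [sq_nonneg u, pow_pos hu0 3]
  calc (∫ v in (0:ℝ)..1,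
      (1 - v / (2 * t + 2)) ^ (2 * s + 1) * (1 + v / t) ^ s)
      ≤ _ := hmono
    _ = 1 - u^2/480 - 7*u^3/320 := hval
    _ < 1 := hlt
end

section
/- For every integer s ≥ 2, the integral H_1 = ∫_{0}^{1} (1 − v/(2s+2))^{2s+1} (1 + v/(s−1))^{s−1} dv satisfies H_1 < 1. -/
open Real Set

lemma log_one_sub_le' {x : ℝ} (h0 : 0 ≤ x) (h1 : x ≤ 1/4) :
    Real.log (1 - x) ≤ -x - x^2/2 := by
  have hx : |x| < 1 := by rw [abs_of_nonneg h0]; linarith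
  have h := Real.abs_log_sub_add_sum_range_le hx 3
  rw [abs_of_nonneg h0] at h
  have hsum : (∑ i ∈ Finset.range 3, x ^ (i + 1) / (i + 1)) = x + x^2/2 + x^3/3 := by
    simp [Finset.sum_range_succ]
    norm_num
  rw [hsum] at h
  have h2 := (abs_le.1 h).2
  have hlt : 0 < 1 - x := by linarith
  have htail : x^4/(1-x) ≤ x^3/3 := by
    rw [div_le_div_iff₀ hlt (by norm_num)]
    nlinarith [pow_nonneg h0 3, pow_nonneg h0 4]
  nlinarith [h2, htail]

lemma log_one_add_le' {y : ℝ} (hy : 0 ≤ y) :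
    Real.log (1 + y) ≤ y - y^2/2 + y^3/3 := by
  set F : ℝ → ℝ := fun u => u - u^2/2 + u^3/3 - Real.log (1+u) with hF
  have key : ∀ t : ℝ, 0 ≤ t →
      HasDerivAt F (1 - t + t^2 - 1/(1+t)) t := by
    intro t ht
    have h1t : (0:ℝ) < 1 + t := by linarith
    have hlog : HasDerivAt (fun u : ℝ => Real.log (1+u)) (1/(1+t)) t := by
      have h := (HasDerivAt.const_add (1:ℝ) (hasDerivAt_id t)).log (by positivity)
      simpa using h
    have hpoly : HasDerivAt (fun u : ℝ => u - u^2/2 + u^3/3) (1 - t + t^2) t := by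
      have h := ((hasDerivAt_id t).sub ((hasDerivAt_pow 2 t).div_const 2)).add
        ((hasDerivAt_pow 3 t).div_const 3)
      exact h.congr_deriv (by push_cast; ring)
    exact hpoly.sub hlog
  have mono : StrictMonoOn F (Set.Ici (0:ℝ)) := by
    apply strictMonoOn_of_deriv_pos (convex_Ici 0)
    · exact fun t ht => (key t ht).continuousAt.continuousWithinAt
    · intro t ht
      rw [interior_Ici] at ht
      have ht0 : 0 < t := ht
      rw [(key t ht0.le).deriv]
      have h1t : (0:ℝ) < 1 + t := by linarith
      have : 1/(1+t) < 1 - t + t^2 := by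
        rw [div_lt_iff₀ h1t]
        nlinarith [pow_pos ht0 3]
      linarith
  have hF0 : F 0 = 0 := by simp [hF]
  have hFy : 0 ≤ F y := by
    rcases hy.eq_or_lt with h | h
    · rw [← h, hF0]
    · have := mono (Set.self_mem_Ici) (Set.mem_Ici.2 hy) h
      rw [hF0] at this; exact this.le
  simp only [hF] at hFy
  linarith

lemma exp_le_quad' {x : ℝ} (h : |x| ≤ 1) : Real.exp x ≤ 1 + x + 3/4*x^2 := by
  have h2 := Real.exp_bound h (by norm_num : 0 < 2)
  have hsum : (∑ m ∈ Finset.range 2, x ^ m / m.factorial) = 1 + x := by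
    simp [Finset.sum_range_succ]
  rw [hsum] at h2
  have h3 := (abs_le.1 h2).2
  have h4 : |x|^2 = x^2 := sq_abs x
  rw [h4] at h3
  norm_num [Nat.factorial] at h3
  linarith

set_option maxHeartbeats 2000000


lemma H1_two : (∫ v in (0:ℝ)..1, (1 - v/6)^5 * (1+v)) < 1 := by
  have key : ∀ v ∈ Set.uIcc (0:ℝ) 1,
      HasDerivAt (fun x : ℝ => x + x^2/12 - 5*x^3/27 + 25*x^4/432 - 11*x^5/1296
        + 29*x^6/46656 - x^7/54432) ((1 - v/6)^5 * (1+v)) v := by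
    intro v _
    have H := (((((((hasDerivAt_id' v).add ((hasDerivAt_pow 2 v).div_const 12)).sub
      (((hasDerivAt_pow 3 v).const_mul (5:ℝ)).div_const 27)).add
      (((hasDerivAt_pow 4 v).const_mul (25:ℝ)).div_const 432)).sub
      (((hasDerivAt_pow 5 v).const_mul (11:ℝ)).div_const 1296)).add
      (((hasDerivAt_pow 6 v).const_mul (29:ℝ)).div_const 46656)).sub
      ((hasDerivAt_pow 7 v).div_const 54432))
    exact H.congr_deriv (by push_cast; ring)
  have hc : Continuous fun v : ℝ => (1 - v/6)^5 * (1+v) := by fun_prop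
  rw [intervalIntegral.integral_eq_sub_of_hasDerivAt key (hc.intervalIntegrable 0 1)]
  norm_num

lemma H1_big (s : ℕ) (hs : 3 ≤ s) :
    (∫ v in (0:ℝ)..1,
        (1 - v / (2 * (s : ℝ) + 2)) ^ (2 * s + 1) * (1 + v / ((s : ℝ) - 1)) ^ (s - 1)) < 1 := by
  have hX3 : (3:ℝ) ≤ (s:ℝ) := by exact_mod_cast hs
  set X : ℝ := (s : ℝ) with hXdef
  obtain ⟨a, ha⟩ : ∃ a : ℝ, a = 1/(2*X+2) := ⟨_, rfl⟩
  obtain ⟨B, hB⟩ : ∃ B : ℝ, B = (2*X+1)/(2*(2*X+2)^2) + (3*X-5)/(6*(X-1)^2) := ⟨_, rfl⟩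
  have hc : (0:ℝ) < 2*X+2 := by linarith
  have hd : (0:ℝ) < X - 1 := by linarith
  have ha0 : 0 < a := by rw [ha]; positivity
  have ha8 : a ≤ 1/8 := by
    rw [ha, div_le_div_iff₀ hc (by norm_num)]; linarith
  have hB0 : 0 < B := by
    rw [hB]; have : (0:ℝ) < 3*X-5 := by linarith
    positivity
  have hB2 : B ≤ 1/2 := by
    rw [hB]
    have h1 : (2*X+1)/(2*(2*X+2)^2) ≤ 1/4 := by
      rw [div_le_div_iff₀ (by positivity) (by norm_num)]; nlinarith
    have h2 : (3*X-5)/(6*(X-1)^2) ≤ 1/4 := by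
      rw [div_le_div_iff₀ (by positivity) (by norm_num)]; nlinarith
    linarith
  -- pointwise bound
  have hpoint : ∀ v ∈ Set.Icc (0:ℝ) 1,
      (1 - v / (2*X + 2)) ^ (2 * s + 1) * (1 + v / (X - 1)) ^ (s - 1)
        ≤ (1 + a*v + 3/4*(a*v)^2) * (1 - B*v^2 + 3/4*(B*v^2)^2) := by
    intro v hv
    obtain ⟨hv0, hv1⟩ := hv
    have hx0 : 0 ≤ v/(2*X+2) := by positivity
    have hx4 : v/(2*X+2) ≤ 1/4 := by rw [div_le_div_iff₀ hc (by norm_num)]; linarith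
    have hy0 : 0 ≤ v/(X-1) := by positivity
    have hbase1 : 0 < 1 - v/(2*X+2) := by linarith
    have e1 : 1 - v/(2*X+2) ≤ Real.exp (-(v/(2*X+2)) - (v/(2*X+2))^2/2) := by
      calc 1 - v/(2*X+2) = Real.exp (Real.log (1 - v/(2*X+2))) := (Real.exp_log hbase1).symm
        _ ≤ _ := Real.exp_le_exp.2 (log_one_sub_le' hx0 hx4)
    have e2 : 1 + v/(X-1) ≤ Real.exp (v/(X-1) - (v/(X-1))^2/2 + (v/(X-1))^3/3) := by
      calc 1 + v/(X-1) = Real.exp (Real.log (1 + v/(X-1))) :=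
            (Real.exp_log (by positivity)).symm
        _ ≤ _ := Real.exp_le_exp.2 (log_one_add_le' hy0)
    have p1 : (1 - v/(2*X+2))^(2*s+1)
        ≤ Real.exp ((2*s+1 : ℕ) * (-(v/(2*X+2)) - (v/(2*X+2))^2/2)) := by
      calc (1 - v/(2*X+2))^(2*s+1) ≤ (Real.exp (-(v/(2*X+2)) - (v/(2*X+2))^2/2))^(2*s+1) :=
            pow_le_pow_left₀ hbase1.le e1 _
        _ = _ := by rw [← Real.exp_nat_mul]
    have p2 : (1 + v/(X-1))^(s-1)
        ≤ Real.exp ((s-1 : ℕ) * (v/(X-1) - (v/(X-1))^2/2 + (v/(X-1))^3/3)) := by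
      calc (1 + v/(X-1))^(s-1) ≤ (Real.exp (v/(X-1) - (v/(X-1))^2/2 + (v/(X-1))^3/3))^(s-1) :=
            pow_le_pow_left₀ (by positivity) e2 _
        _ = _ := by rw [← Real.exp_nat_mul]
    have hprod : (1 - v/(2*X+2))^(2*s+1) * (1 + v/(X-1))^(s-1)
        ≤ Real.exp ((2*s+1 : ℕ) * (-(v/(2*X+2)) - (v/(2*X+2))^2/2)
            + (s-1 : ℕ) * (v/(X-1) - (v/(X-1))^2/2 + (v/(X-1))^3/3)) := by
      rw [Real.exp_add]
      exact mul_le_mul p1 p2 (by positivity) (Real.exp_pos _).le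
    have hcast1 : ((2*s+1 : ℕ) : ℝ) = 2*X+1 := by push_cast [hXdef]; ring
    have hcast2 : ((s-1 : ℕ) : ℝ) = X-1 := by
      have h1 : (1:ℕ) ≤ s := by omega
      push_cast [h1, hXdef]; ring
    have hE : ((2*s+1 : ℕ) : ℝ) * (-(v/(2*X+2)) - (v/(2*X+2))^2/2)
        + ((s-1 : ℕ) : ℝ) * (v/(X-1) - (v/(X-1))^2/2 + (v/(X-1))^3/3) ≤ a*v - B*v^2 := by
      rw [hcast1, hcast2]
      have hid : a*v - B*v^2 - ((2*X+1) * (-(v/(2*X+2)) - (v/(2*X+2))^2/2)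
          + (X-1) * (v/(X-1) - (v/(X-1))^2/2 + (v/(X-1))^3/3))
          = (v^2 - v^3)/(3*(X-1)^2) := by
        rw [ha, hB]; field_simp; ring
      have hnn : 0 ≤ (v^2 - v^3)/(3*(X-1)^2) :=
        div_nonneg (by nlinarith) (by positivity)
      linarith
    have hsplit : Real.exp (a*v - B*v^2) = Real.exp (a*v) * Real.exp (-(B*v^2)) := by
      rw [← Real.exp_add]; ring_nf
    have q1 : Real.exp (a*v) ≤ 1 + a*v + 3/4*(a*v)^2 := by
      apply exp_le_quad'
      rw [abs_of_nonneg (by positivity)]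
      nlinarith [mul_nonneg ha0.le hv0]
    have q2 : Real.exp (-(B*v^2)) ≤ 1 - B*v^2 + 3/4*(B*v^2)^2 := by
      have hv2 : v^2 ≤ 1 := by nlinarith
      have hBv : B*v^2 ≤ 1 := by
        calc B*v^2 ≤ B*1 := mul_le_mul_of_nonneg_left hv2 hB0.le
          _ = B := mul_one B
          _ ≤ 1 := by linarith
      have h := exp_le_quad' (x := -(B*v^2)) (by
        rw [abs_neg, abs_of_nonneg (by positivity)]; exact hBv)
      have h' : (1:ℝ) + -(B*v^2) + 3/4*(-(B*v^2))^2 = 1 - B*v^2 + 3/4*(B*v^2)^2 := by ring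
      linarith
    calc (1 - v/(2*X+2))^(2*s+1) * (1 + v/(X-1))^(s-1)
        ≤ Real.exp ((2*s+1 : ℕ) * (-(v/(2*X+2)) - (v/(2*X+2))^2/2)
            + (s-1 : ℕ) * (v/(X-1) - (v/(X-1))^2/2 + (v/(X-1))^3/3)) := hprod
      _ ≤ Real.exp (a*v - B*v^2) := Real.exp_le_exp.2 hE
      _ = Real.exp (a*v) * Real.exp (-(B*v^2)) := hsplit
      _ ≤ (1 + a*v + 3/4*(a*v)^2) * (1 - B*v^2 + 3/4*(B*v^2)^2) :=
          mul_le_mul q1 q2 (Real.exp_pos _).le (by positivity)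
  -- integrability and monotonicity
  have hfc : Continuous fun v : ℝ =>
      (1 - v / (2*X + 2)) ^ (2 * s + 1) * (1 + v / (X - 1)) ^ (s - 1) := by fun_prop
  have hPc : Continuous fun v : ℝ =>
      (1 + a*v + 3/4*(a*v)^2) * (1 - B*v^2 + 3/4*(B*v^2)^2) := by fun_prop
  have hmono := intervalIntegral.integral_mono_on (μ := MeasureTheory.volume) (by norm_num : (0:ℝ) ≤ 1)
    (hfc.intervalIntegrable 0 1) (hPc.intervalIntegrable 0 1) hpoint
  -- compute the polynomial integral
  have key : ∀ v ∈ Set.uIcc (0:ℝ) 1,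
      HasDerivAt (fun x : ℝ => x + a*x^2/2 + a^2*x^3/4 - B*x^3/3 - a*B*x^4/4
          - 3*a^2*B*x^5/20 + 3*B^2*x^5/20 + a*B^2*x^6/8 + 9*a^2*B^2*x^7/112)
        ((1 + a*v + 3/4*(a*v)^2) * (1 - B*v^2 + 3/4*(B*v^2)^2)) v := by
    intro v _
    have H := ((((((((hasDerivAt_id' v).add
      (((hasDerivAt_pow 2 v).const_mul a).div_const 2)).add
      (((hasDerivAt_pow 3 v).const_mul (a^2)).div_const 4)).sub
      (((hasDerivAt_pow 3 v).const_mul B).div_const 3)).sub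
      (((hasDerivAt_pow 4 v).const_mul (a*B)).div_const 4)).sub
      (((hasDerivAt_pow 5 v).const_mul (3*a^2*B)).div_const 20)).add
      (((hasDerivAt_pow 5 v).const_mul (3*B^2)).div_const 20)).add
      (((hasDerivAt_pow 6 v).const_mul (a*B^2)).div_const 8)).add
      (((hasDerivAt_pow 7 v).const_mul (9*a^2*B^2)).div_const 112)
    exact H.congr_deriv (by push_cast; ring)
  have hval := intervalIntegral.integral_eq_sub_of_hasDerivAt key (hPc.intervalIntegrable 0 1)
  rw [hval] at hmono
  norm_num at hmono
  -- final polynomial inequality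
  have hfin : 1 + a/2 + a^2/4 - B/3 - a*B/4 - 3*a^2*B/20 + 3*B^2/20 + a*B^2/8
      + 9*a^2*B^2/112 < 1 := by
    have hpoly : 0 < 493248*(X-3)^8 + 12461232*(X-3)^7 + 134201028*(X-3)^6
        + 801407664*(X-3)^5 + 2887697793*(X-3)^4 + 6387986088*(X-3)^3
        + 8402069976*(X-3)^2 + 5935782816*(X-3) + 1683828240 := by
      have h3 : 0 ≤ X - 3 := by linarith
      positivity
    have hexpr : B*(1/3) + a*B/4 + 3*a^2*B/20 - a/2 - a^2/4 - 3*B^2/20 - a*B^2/8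
        - 9*a^2*B^2/112
        = (493248*X^8 + 623280*X^7 - 3186348*X^6 - 4828968*X^5 + 4573533*X^4
            + 9221148*X^3 - 1432974*X^2 - 7569324*X - 3020763)
          / (60480*(2*X+2)^6*(X-1)^4) := by
      rw [ha, hB]; field_simp; ring
    have hpos2 : 0 < (493248*X^8 + 623280*X^7 - 3186348*X^6 - 4828968*X^5 + 4573533*X^4
            + 9221148*X^3 - 1432974*X^2 - 7569324*X - 3020763)
          / (60480*(2*X+2)^6*(X-1)^4) := by
      apply div_pos _ (by positivity)
      nlinarith [hpoly]
    rw [← hexpr] at hpos2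
    linarith
  linarith [hmono, hfin]


/-- For every integer `s ≥ 2`,
`H_1 = ∫_0^1 (1 - v/(2s+2))^{2s+1} (1 + v/(s-1))^{s-1} dv < 1`. -/
theorem H1_lt_one (s : ℕ) (hs : 2 ≤ s) :
    (∫ v in (0:ℝ)..1,
        (1 - v / (2 * (s : ℝ) + 2)) ^ (2 * s + 1) * (1 + v / ((s : ℝ) - 1)) ^ (s - 1)) < 1 := by
  rcases eq_or_lt_of_le hs with h2 | h3
  · subst h2
    norm_num
    simpa using H1_two
  · exact H1_big s h3
end

section
/- For every integer s ≥ 2, the integral I_s = ∫_{0}^{1} (1 − v/(2s+1))^{2s} (1 + v/(s−1))^{s−1} dv satisfies I_s < 1 + (1 + 3s(−11s³ + (s+4)²)) / ((s−1)⁴ (2s+1)⁶) + s⁶ (29 + 7s − 15s²/2) / ((s−1)⁴ (2s+1)⁶). -/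
set_option maxHeartbeats 2000000 in
/-- For every integer `s ≥ 2`,
`I_s = ∫_0^1 (1 - v/(2s+1))^{2s} (1 + v/(s-1))^{s-1} dv` satisfies
`I_s < 1 + (1 + 3s(-11s³ + (s+4)²))/((s-1)⁴(2s+1)⁶) + s⁶(29 + 7s - 15s²/2)/((s-1)⁴(2s+1)⁶)`. -/
theorem Is_lt_bound (s : ℕ) (hs : 2 ≤ s) :
    (∫ v in (0:ℝ)..1,
        (1 - v / (2 * (s : ℝ) + 1)) ^ (2 * s) * (1 + v / ((s : ℝ) - 1)) ^ (s - 1)) <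
      1 + (1 + 3 * (s : ℝ) * (-11 * (s : ℝ) ^ 3 + ((s : ℝ) + 4) ^ 2)) /
            (((s : ℝ) - 1) ^ 4 * (2 * (s : ℝ) + 1) ^ 6) +
        (s : ℝ) ^ 6 * (29 + 7 * (s : ℝ) - 15 * (s : ℝ) ^ 2 / 2) /
            (((s : ℝ) - 1) ^ 4 * (2 * (s : ℝ) + 1) ^ 6) := by
  obtain ⟨m, rfl⟩ : ∃ m, s = m + 2 := ⟨s - 2, by omega⟩
  push_cast
  set q : ℝ := (m:ℝ) with hqdef
  have hq0 : (0:ℝ) ≤ q := Nat.cast_nonneg m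
  have ha0 : (0:ℝ) < 2*q+5 := by linarith
  have hb0 : (0:ℝ) < q+1 := by linarith
  have ha : (2*q+5) ≠ 0 := ne_of_gt ha0
  have hb : (q+1) ≠ 0 := ne_of_gt hb0
  set Xf : ℝ → ℝ := fun v => (3*v*(2*q+5) + (q+1)*v^2 - 2*(2*q+5)*v^2 + v^3)/(2*q+5)^2 with hXf
  set g : ℝ → ℝ := fun v => (1 - v/(2*q+5))^2 * (1 + Xf v + (Xf v)^2/2 + 2/9*(Xf v)^3) with hg
  have hXfc : Continuous Xf := by
    rw [hXf]; exact Continuous.div_const (by continuity) _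
  have hgcont : Continuous g := by
    rw [hg]; fun_prop
  have hgint : IntervalIntegrable g MeasureTheory.volume 0 1 :=
    hgcont.intervalIntegrable 0 1
  have hfint : IntervalIntegrable
      (fun v : ℝ => (1 - v / (2 * (q + 2) + 1)) ^ (2 * (m + 2)) * (1 + v / (q + 2 - 1)) ^ (m + 1))
      MeasureTheory.volume 0 1 := by
    apply Continuous.intervalIntegrable
    exact ((continuous_const.sub (continuous_id.div_const _)).pow _).mul
      ((continuous_const.add (continuous_id.div_const _)).pow _)
  have hpt : ∀ v ∈ Set.Icc (0:ℝ) 1,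
      (1 - v / (2 * (q + 2) + 1)) ^ (2 * (m + 2)) * (1 + v / (q + 2 - 1)) ^ (m + 1) ≤ g v := by
    intro v hv
    obtain ⟨hv0, hv1⟩ := hv
    have e1 : 2*(q+2)+1 = 2*q+5 := by ring
    have e2 : q+2-1 = q+1 := by ring
    rw [e1, e2]
    have hXeq : ((m:ℝ)+1) * ((1 - v/(2*q+5))^2 * (1 + v/(q+1)) - 1) = Xf v := by
      rw [hXf, ← hqdef]
      field_simp
      ring
    have hX0 : 0 ≤ Xf v := by
      rw [hXf]
      apply div_nonneg _ (by positivity)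
      nlinarith [mul_nonneg (mul_nonneg hq0 hv0) (sub_nonneg.mpr hv1),
        mul_nonneg hv0 (sub_nonneg.mpr hv1), pow_nonneg hv0 3, mul_nonneg hq0 hv0]
    have hX1 : Xf v ≤ 1 := by
      rw [hXf, div_le_one (by positivity)]
      nlinarith [mul_nonneg (mul_nonneg hq0 hv0) (sub_nonneg.mpr hv1),
        mul_nonneg hv0 (sub_nonneg.mpr hv1), pow_nonneg hv0 3, mul_nonneg hq0 hv0,
        mul_nonneg hq0 (mul_nonneg hv0 hv0), sq_nonneg q, sq_nonneg (q*v), mul_nonneg hq0 hq0]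
    have hB0 : 0 ≤ (1 - v/(2*q+5))^2 * (1 + v/(q+1)) := by
      apply mul_nonneg (sq_nonneg _)
      have : 0 ≤ v/(q+1) := div_nonneg hv0 (le_of_lt hb0)
      linarith
    have hpow : ((1 - v/(2*q+5))^2 * (1 + v/(q+1)))^(m+1)
        ≤ Real.exp (((m:ℝ)+1) * ((1 - v/(2*q+5))^2 * (1 + v/(q+1)) - 1)) := by
      have h1 : (1 - v/(2*q+5))^2 * (1 + v/(q+1)) ≤
          Real.exp ((1 - v/(2*q+5))^2 * (1 + v/(q+1)) - 1) := by
        have := Real.add_one_le_exp ((1 - v/(2*q+5))^2 * (1 + v/(q+1)) - 1); linarith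
      calc ((1 - v/(2*q+5))^2 * (1 + v/(q+1)))^(m+1)
          ≤ (Real.exp ((1 - v/(2*q+5))^2 * (1 + v/(q+1)) - 1))^(m+1) :=
            pow_le_pow_left₀ hB0 h1 _
        _ = Real.exp (((m:ℝ)+1) * ((1 - v/(2*q+5))^2 * (1 + v/(q+1)) - 1)) := by
            rw [← Real.exp_nat_mul]; push_cast; ring_nf
    have hexp : Real.exp (Xf v) ≤ 1 + Xf v + (Xf v)^2/2 + 2/9*(Xf v)^3 := by
      have h := Real.exp_bound (x := Xf v) (by rw [abs_of_nonneg hX0]; exact hX1)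
        (n := 3) (by norm_num)
      rw [abs_of_nonneg hX0] at h
      have h2 := (abs_le.mp h).2
      norm_num [Finset.sum_range_succ, Nat.factorial] at h2
      linarith
    have hsp : ∀ u w : ℝ, u ^ (2*(m+2)) * w ^ (m+1) = (u^2*w)^(m+1) * u^2 := fun u w => by ring
    calc (1 - v/(2*q+5)) ^ (2*(m+2)) * (1 + v/(q+1)) ^ (m+1)
        = ((1 - v/(2*q+5))^2 * (1 + v/(q+1)))^(m+1) * (1 - v/(2*q+5))^2 := hsp _ _
      _ ≤ Real.exp (((m:ℝ)+1) * ((1 - v/(2*q+5))^2 * (1 + v/(q+1)) - 1)) * (1 - v/(2*q+5))^2 :=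
          mul_le_mul_of_nonneg_right hpow (sq_nonneg _)
      _ = Real.exp (Xf v) * (1 - v/(2*q+5))^2 := by rw [hXeq]
      _ ≤ (1 + Xf v + (Xf v)^2/2 + 2/9*(Xf v)^3) * (1 - v/(2*q+5))^2 :=
          mul_le_mul_of_nonneg_right hexp (sq_nonneg _)
      _ = g v := by rw [hg]; ring
  have hderiv : ∀ x ∈ Set.uIcc (0:ℝ) 1,
      HasDerivAt (fun t : ℝ => (((127733760)*q^8 + (2554675200)*q^7 + (22353408000)*q^6 + (111767040000)*q^5 + (349272000000)*q^4 + (698544000000)*q^3 + (873180000000)*q^2 + (623700000000)*q + (194906250000)) * t ^ 1 + ((31933440)*q^7 + (558835200)*q^6 + (4191264000)*q^5 + (17463600000)*q^4 + (43659000000)*q^3 + (65488500000)*q^2 + (54573750000)*q + (19490625000)) * t ^ 2 + ((-31933440)*q^7 + (-580124160)*q^6 + (-4510598400)*q^5 + (-19459440000)*q^4 + (-50311800000)*q^3 + (-77962500000)*q^2 + (-67047750000)*q + (-24688125000)) * t ^ 3 + ((-3991680)*q^6 + (-65862720)*q^5 + (-449064000)*q^4 + (-1621620000)*q^3 + (-3274425000)*q^2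 + (-3508312500)*q + (-1559250000)) * t ^ 4 + ((7185024)*q^6 + (113363712)*q^5 + (730876608)*q^4 + (2468854080)*q^3 + (4611637800)*q^2 + (4515588000)*q + (1808730000)) * t ^ 5 + ((1995840)*q^5 + (48232800)*q^4 + (372057840)*q^3 + (1293553800)*q^2 + (2116422000)*q + (1330560000)) * t ^ 6 + ((-1710720)*q^5 + (-35782560)*q^4 + (-273144960)*q^3 + (-979066440)*q^2 + (-1676149200)*q + (-1108404000)) * t ^ 7 + ((2993760)*q^4 + (41663160)*q^3 + (208066320)*q^2 + (447005790)*q + (351143100)) * t ^ 8 + ((-2106720)*q^3 + (-19958400)*q^2 + (-61538400)*q + (-62065080)) * t ^ 9 + ((742896)*q^2 + (4413024)*q + (6464304)) * t ^ 10 + ((-131040)*q + (-372960)) * t ^ 11 + ((9240)) * t ^ 12) / (498960*(2*q+5)^8)) (g x) x := by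
    intro x _
    have h := (((((((((((((hasDerivAt_pow 1 x).const_mul ((127733760)*q^8 + (2554675200)*q^7 + (22353408000)*q^6 + (111767040000)*q^5 + (349272000000)*q^4 + (698544000000)*q^3 + (873180000000)*q^2 + (623700000000)*q + (194906250000))).add ((hasDerivAt_pow 2 x).const_mul ((31933440)*q^7 + (558835200)*q^6 + (4191264000)*q^5 + (17463600000)*q^4 + (43659000000)*q^3 + (65488500000)*q^2 + (54573750000)*q + (19490625000)))).add ((hasDerivAt_pow 3 x).const_mul ((-31933440)*q^7 + (-580124160)*q^6 + (-4510598400)*q^5 + (-19459440000)*q^4 + (-50311800000)*q^3 + (-77962500000)*q^2 + (-67047750000)*q + (-24688125000)))).add ((hasDerivAt_pow 4 x).const_mul ((-3991680)*q^6 + (-65862720)*q^5 + (-449064000)*q^4 + (-1621620000)*q^3 + (-3274425000)*q^2 + (-3508312500)*q + (-1559250000)))).add ((hasDerivAt_pow 5 x).const_mul ((7185024)*q^6 + (113363712)*q^5 + (730876608)*q^4 + (2468854080)*q^3 + (4611637800)*q^2 + (4515588000)*q + (1808730000)))).add ((hasDerivAt_pow 6 x).const_mul ((1995840)*q^5 +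 (48232800)*q^4 + (372057840)*q^3 + (1293553800)*q^2 + (2116422000)*q + (1330560000)))).add ((hasDerivAt_pow 7 x).const_mul ((-1710720)*q^5 + (-35782560)*q^4 + (-273144960)*q^3 + (-979066440)*q^2 + (-1676149200)*q + (-1108404000)))).add ((hasDerivAt_pow 8 x).const_mul ((2993760)*q^4 + (41663160)*q^3 + (208066320)*q^2 + (447005790)*q + (351143100)))).add ((hasDerivAt_pow 9 x).const_mul ((-2106720)*q^3 + (-19958400)*q^2 + (-61538400)*q + (-62065080)))).add ((hasDerivAt_pow 10 x).const_mul ((742896)*q^2 + (4413024)*q + (6464304)))).add ((hasDerivAt_pow 11 x).const_mul ((-131040)*q + (-372960)))).add ((hasDerivAt_pow 12 x).const_mul ((9240)))).div_const (498960*(2*q+5)^8)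
    convert h using 1
    · rfl
    · rfl
    · rfl
    rw [hg, hXf]
    push_cast
    field_simp
    ring
  have hval : (∫ v in (0:ℝ)..1, g v) = ((127733760)*q^8 + (2554675200)*q^7 + (22335312384)*q^6 + (111495491712)*q^5 + (347573416608)*q^4 + (692876903400)*q^3 + (862546550976)*q^2 + (613063297674)*q + (190475564604)) / (498960*(2*q+5)^8) := by
    rw [intervalIntegral.integral_eq_sub_of_hasDerivAt hderiv hgint]
    norm_num
    ring
  have hpos : (0:ℝ) < ((521136)*q^10 + (7259472)*q^9 + (41518620)*q^8 + (133409100)*q^7 + (344628504)*q^6 + (1084969473)*q^5 + (3293526266)*q^4 + (6783823226)*q^3 + (8461966824)*q^2 + (5900793185)*q + (1821606566)) / (83160 * (q+1)^4 * (2*q+5)^8) := by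
    apply div_pos
    · nlinarith [pow_nonneg hq0 2, pow_nonneg hq0 3, pow_nonneg hq0 4, pow_nonneg hq0 5, pow_nonneg hq0 6, pow_nonneg hq0 7, pow_nonneg hq0 8, pow_nonneg hq0 9, pow_nonneg hq0 10]
    · positivity
  have hiden : 1 + (1 + 3 * (q + 2) * (-11 * (q + 2) ^ 3 + (q + 2 + 4) ^ 2)) /
            ((q + 2 - 1) ^ 4 * (2 * (q + 2) + 1) ^ 6) +
        (q + 2) ^ 6 * (29 + 7 * (q + 2) - 15 * (q + 2) ^ 2 / 2) /
            ((q + 2 - 1) ^ 4 * (2 * (q + 2) + 1) ^ 6)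
      = (((127733760)*q^8 + (2554675200)*q^7 + (22335312384)*q^6 + (111495491712)*q^5 + (347573416608)*q^4 + (692876903400)*q^3 + (862546550976)*q^2 + (613063297674)*q + (190475564604)) / (498960*(2*q+5)^8))
        + ((521136)*q^10 + (7259472)*q^9 + (41518620)*q^8 + (133409100)*q^7 + (344628504)*q^6 + (1084969473)*q^5 + (3293526266)*q^4 + (6783823226)*q^3 + (8461966824)*q^2 + (5900793185)*q + (1821606566)) / (83160 * (q+1)^4 * (2*q+5)^8) := by
    have e2 : q+2-1 = q+1 := by ring
    have e1 : 2*(q+2)+1 = 2*q+5 := by ring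
    rw [e1, e2]
    field_simp
    ring
  calc (∫ v in (0:ℝ)..1,
        (1 - v / (2 * (q + 2) + 1)) ^ (2 * (m + 2)) * (1 + v / (q + 2 - 1)) ^ (m + 1))
      ≤ ∫ v in (0:ℝ)..1, g v :=
        intervalIntegral.integral_mono_on (by norm_num) hfint hgint hpt
    _ = ((127733760)*q^8 + (2554675200)*q^7 + (22335312384)*q^6 + (111495491712)*q^5 + (347573416608)*q^4 + (692876903400)*q^3 + (862546550976)*q^2 + (613063297674)*q + (190475564604)) / (498960*(2*q+5)^8) := hval
    _ < _ := by rw [hiden]; linarith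
end
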